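/- arXiv:2208.08310 — 3 statements merged into one kernel-verified Lean document; each statement's English description precedes it below -/
import Mathlib

section
/- The unroll of a finite functional graph from a periodic point has exactly one infinite path starting from the root: if α is a finite type, f : α → α, and v is a periodic point of f (f^[n] v = v for some n ≥ 1), then there exists a unique sequence s : ℕ → α with s 0 = v and f (s (i+1)) = s i for all i : ℕ. -/
namespace DDS

/-- A homomorphism of digraphs `(γ, E) → (δ, E')` is a map preserving edges. -/
def IsHom {γ : Type*} {δ : Type*} (E : γ → γ → Prop) (E' : δ → δ → Prop) (τ : γ → δ) : Prop :=
  ∀ ⦃u v⦄, E u v → E' (τ u) (τ v)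

/-- Two digraphs are isomorphic if there is an edge-preserving (in both directions) bijection. -/
def Isomorphic {γ : Type*} {δ : Type*} (E : γ → γ → Prop) (E' : δ → δ → Prop) : Prop :=
  ∃ e : γ ≃ δ, ∀ u v, E u v ↔ E' (e u) (e v)

/-- The number of digraph homomorphisms from `(γ, E)` to `(δ, E')`. -/
noncomputable def homCount (γ : Type*) (δ : Type*) (E : γ → γ → Prop) (E' : δ → δ → Prop) : ℕ :=
  Nat.card {τ : γ → δ // IsHom E E' τ}

/-- An in-tree: a root and a parent map such that the root is a fixed point and every
vertex reaches the root by iterating the parent map. -/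
structure InTree (V : Type*) where
  root : V
  parent : V → V
  parent_root : parent root = root
  reaches_root : ∀ v, ∃ k, parent^[k] v = root

namespace InTree

variable {V : Type*}

/-- Edges of an in-tree are directed towards the root. -/
def Edge (T : InTree V) (v w : V) : Prop := v ≠ T.root ∧ w = T.parent v

/-- The height of a vertex: the least `k` with `parent^[k] v = root`. -/
noncomputable def height (T : InTree V) (v : V) : ℕ := sInf {k | T.parent^[k] v = T.root}

lemma height_spec (T : InTree V) (v : V) : T.parent^[T.height v] v = T.root :=
  Nat.sInf_mem (T.reaches_root v)

@[simp] lemma height_root (T : InTree V) : T.height T.root = 0 :=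
  Nat.sInf_eq_zero.mpr (Or.inl (by simp))

lemma height_eq_zero_iff (T : InTree V) {v : V} : T.height v = 0 ↔ v = T.root := by
  constructor
  · intro h
    have hs := T.height_spec v
    rw [h] at hs
    simpa using hs
  · rintro rfl
    exact T.height_root

lemma height_parent (T : InTree V) {v : V} (hv : v ≠ T.root) :
    T.height v = T.height (T.parent v) + 1 := by
  have h1 : T.height v ≠ 0 := fun h => hv (T.height_eq_zero_iff.mp h)
  obtain ⟨m, hm⟩ := Nat.exists_eq_succ_of_ne_zero h1
  have hsp : T.parent^[T.height v] v = T.root := T.height_spec v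
  rw [hm, Function.iterate_succ_apply] at hsp
  have hle : T.height (T.parent v) ≤ m := Nat.sInf_le hsp
  have hge : T.height v ≤ T.height (T.parent v) + 1 := by
    apply Nat.sInf_le
    show T.parent^[T.height (T.parent v) + 1] v = T.root
    rw [Function.iterate_succ_apply]
    exact T.height_spec (T.parent v)
  omega

lemma height_parent_le (T : InTree V) (v : V) : T.height (T.parent v) ≤ T.height v := by
  by_cases hv : v = T.root
  · subst hv; rw [T.parent_root]
  · rw [T.height_parent hv]; omega

/-- The height of a finite in-tree: the maximum height of a vertex. -/
noncomputable def treeHeight [Fintype V] (T : InTree V) : ℕ := Finset.univ.sup T.height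

section Star

variable {V₁ V₂ : Type*} (T₁ : InTree V₁) (T₂ : InTree V₂)

/-- Vertices of the `⋆` product: pairs of vertices of equal height. -/
def StarVertex := {x : V₁ × V₂ // T₁.height x.1 = T₂.height x.2}

lemma star_parent_mem (x : V₁ × V₂) (hx : T₁.height x.1 = T₂.height x.2) :
    T₁.height (T₁.parent x.1) = T₂.height (T₂.parent x.2) := by
  by_cases h : x.1 = T₁.root
  · have h2 : x.2 = T₂.root := by
      apply T₂.height_eq_zero_iff.mp
      rw [← hx, h, T₁.height_root]
    rw [h, h2, T₁.parent_root, T₂.parent_root, T₁.height_root, T₂.height_root]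
  · have h2 : x.2 ≠ T₂.root := by
      intro hc
      apply h
      apply T₁.height_eq_zero_iff.mp
      rw [hx, hc, T₂.height_root]
    have e1 := T₁.height_parent h
    have e2 := T₂.height_parent h2
    omega

/-- The parent map of the `⋆` product. -/
def starParent (x : StarVertex T₁ T₂) : StarVertex T₁ T₂ :=
  ⟨(T₁.parent x.1.1, T₂.parent x.1.2), star_parent_mem T₁ T₂ x.1 x.2⟩

lemma starParent_iterate (k : ℕ) (x : StarVertex T₁ T₂) :
    ((starParent T₁ T₂)^[k] x).1 = (T₁.parent^[k] x.1.1, T₂.parent^[k] x.1.2) := by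
  induction k generalizing x with
  | zero => simp
  | succ k ih =>
      rw [Function.iterate_succ_apply, Function.iterate_succ_apply,
        Function.iterate_succ_apply, ih]
      rfl

/-- The `⋆` product of two in-trees. -/
def star : InTree (StarVertex T₁ T₂) where
  root := ⟨(T₁.root, T₂.root), by simp⟩
  parent := starParent T₁ T₂
  parent_root := by
    apply Subtype.ext
    show (T₁.parent T₁.root, T₂.parent T₂.root) = (T₁.root, T₂.root)
    rw [T₁.parent_root, T₂.parent_root]
  reaches_root := by
    intro x
    refine ⟨T₁.height x.1.1, Subtype.ext ?_⟩
    rw [starParent_iterate]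
    have h1 : T₁.parent^[T₁.height x.1.1] x.1.1 = T₁.root := T₁.height_spec _
    have h2 : T₂.parent^[T₁.height x.1.1] x.1.2 = T₂.root := by
      rw [x.2]; exact T₂.height_spec _
    show (_, _) = (T₁.root, T₂.root)
    rw [h1, h2]

end Star

section Cut

variable (T : InTree V) (t : ℕ)

/-- Vertices of the cut at level `t`: vertices of height at most `t`. -/
def CutVertex := {v : V // T.height v ≤ t}

/-- The parent map of the cut. -/
def cutParent (x : CutVertex T t) : CutVertex T t :=
  ⟨T.parent x.1, le_trans (T.height_parent_le x.1) x.2⟩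

lemma cutParent_iterate (k : ℕ) (x : CutVertex T t) :
    ((cutParent T t)^[k] x).1 = T.parent^[k] x.1 := by
  induction k generalizing x with
  | zero => simp
  | succ k ih =>
      rw [Function.iterate_succ_apply, Function.iterate_succ_apply, ih]
      rfl

/-- The cut of an in-tree at level `t`: the sub-in-tree induced on vertices of height `≤ t`. -/
def cut : InTree (CutVertex T t) where
  root := ⟨T.root, by simp⟩
  parent := cutParent T t
  parent_root := Subtype.ext T.parent_root
  reaches_root := fun x =>
    ⟨T.height x.1, Subtype.ext (by rw [cutParent_iterate]; exact T.height_spec x.1)⟩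

end Cut

end InTree

section Unroll

variable {α : Type*} (f : α → α) (v : α)

/-- Vertices of the unroll of the functional graph of `f` from `v`. -/
def UnrollVertex := {ui : α × ℕ // f^[ui.2] ui.1 = v}

/-- The parent map of the unroll: `(u, i+1) ↦ (f u, i)`, fixing the root `(v, 0)`. -/
def unrollParent : UnrollVertex f v → UnrollVertex f v
  | ⟨(u, 0), h⟩ => ⟨(u, 0), h⟩
  | ⟨(u, i+1), h⟩ => ⟨(f u, i), by rw [← Function.iterate_succ_apply]; exact h⟩

lemma unrollParent_iterate :
    ∀ (i : ℕ) (u : α) (h : f^[i] u = v),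
      (unrollParent f v)^[i] ⟨(u, i), h⟩ = ⟨(v, 0), rfl⟩ := by
  intro i
  induction i with
  | zero =>
      intro u h
      have hu : u = v := by simpa using h
      subst hu
      rfl
  | succ i ih =>
      intro u h
      show (unrollParent f v)^[i] (unrollParent f v ⟨(u, i + 1), h⟩) = _
      show (unrollParent f v)^[i] ⟨(f u, i), _⟩ = _
      exact ih (f u) _

/-- The unroll of the functional graph of `f : α → α` from the point `v`. -/
def unroll : InTree (UnrollVertex f v) where
  root := ⟨(v, 0), rfl⟩
  parent := unrollParent f v
  parent_root := rfl
  reaches_root := fun x => ⟨x.1.2, by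
    obtain ⟨⟨u, i⟩, h⟩ := x
    exact unrollParent_iterate f v i u h⟩

end Unroll

section FG

/-- The number of periodic points of `f`. -/
noncomputable def periodicCount {α : Type*} (f : α → α) : ℕ :=
  Nat.card {x : α // ∃ n, 1 ≤ n ∧ f^[n] x = x}

/-- A functional graph is connected if the equivalence relation generated by
`x ∼ f x` relates all pairs of points. -/
def FGConnected {α : Type*} (f : α → α) : Prop :=
  ∀ x y : α, Relation.EqvGen (fun u w => f u = w) x y

/-- Isomorphism of functional graphs. -/
def FGIso {α β : Type*} (f : α → α) (g : β → β) : Prop :=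
  ∃ e : α ≃ β, ∀ x, e (f x) = g (e x)

/-- The product of two functional graphs. -/
def prodMap {α γ : Type*} (f : α → α) (h : γ → γ) : α × γ → α × γ :=
  fun z => (f z.1, h z.2)

/-- `FGContains f h g` means the functional graph of `g` is (isomorphic to) a union of
connected components of the product `f × h`. -/
def FGContains {α γ β : Type*} (f : α → α) (h : γ → γ) (g : β → β) : Prop :=
  ∃ e : β → α × γ, Function.Injective e ∧ e ∘ g = prodMap f h ∘ e ∧
    ∀ z, prodMap f h z ∈ Set.range e → z ∈ Set.range e

end FG

end DDS

open DDS DDS.InTree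

/-- The unroll of a finite functional graph from a periodic point has exactly one infinite
path starting from the root: there is a unique backward orbit through a periodic point. -/
theorem unique_infinite_path {α : Type*} [Fintype α] (f : α → α) (v : α)
    (hv : ∃ n, 1 ≤ n ∧ f^[n] v = v) :
    ∃! s : ℕ → α, s 0 = v ∧ ∀ i, f (s (i + 1)) = s i := by
  obtain ⟨n, hn1, hnv⟩ := hv
  -- backward iteration lemma
  have back : ∀ (s : ℕ → α), (∀ i, f (s (i+1)) = s i) → ∀ i d, f^[d] (s (i+d)) = s i := by
    intro s hs i d
    induction d with
    | zero => simp
    | succ d ih =>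
        rw [Function.iterate_succ_apply, show i + (d+1) = (i+d)+1 from rfl, hs, ih]
  -- key lemma: every term of such a sequence is an iterate of v with a compatible exponent
  have key : ∀ (s : ℕ → α), s 0 = v → (∀ i, f (s (i+1)) = s i) →
      ∀ i, ∃ a, s i = f^[a] v ∧ f^[i+a] v = v := by
    intro s h0 hs i
    have main : ∀ k l, k < l → s (i+k) = s (i+l) →
        ∃ a, s i = f^[a] v ∧ f^[i+a] v = v := by
      intro k l hkl he
      set p := l - k with hp
      have hp1 : 1 ≤ p := by omega
      have hper : f^[p] (s (i+l)) = s (i+l) := by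
        have h1 := back s hs (i+k) p
        rw [show i+k+p = i+l by omega] at h1
        rw [h1, he]
      have hiter : ∀ c, f^[c * p] (s (i+l)) = s (i+l) := by
        intro c
        induction c with
        | zero => simp
        | succ c ih =>
            rw [Nat.succ_mul, Function.iterate_add_apply, hper, ih]
      have hv2 : f^[i+l] (s (i+l)) = v := by
        have h1 := back s hs 0 (i+l)
        simpa [h0] using h1
      set c := i + l with hc
      have hcle : c ≤ c * p := Nat.le_mul_of_pos_right c (by omega)
      have hb : s (i+l) = f^[c*p - c] v := by
        have h1 : f^[(c*p - c) + c] (s (i+l)) = s (i+l) := by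
          rw [show c*p - c + c = c*p by omega]; exact hiter c
        rw [Function.iterate_add_apply, hv2] at h1
        exact h1.symm
      have hsi : s i = f^[l + (c*p - c)] v := by
        have h1 := back s hs i l
        rw [← h1, hb, ← Function.iterate_add_apply]
      refine ⟨l + (c*p - c), hsi, ?_⟩
      have h2 : f^[i] (s i) = v := by
        have h1 := back s hs 0 i
        simpa [h0] using h1
      rw [Function.iterate_add_apply, ← hsi]
      exact h2
    obtain ⟨k, l, hkl, he⟩ := Finite.exists_ne_map_eq_of_infinite (fun k => s (i + k))
    rcases hkl.lt_or_gt with h | h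
    · exact main k l h he
    · exact main l k h he.symm
  -- the canonical sequence
  have hnmul : ∀ i, f^[n + i*(n-1)] v = f^[i*(n-1)] v := by
    intro i
    rw [Nat.add_comm, Function.iterate_add_apply, hnv]
  have hcanrec : ∀ i, f (f^[(i+1)*(n-1)] v) = f^[i*(n-1)] v := by
    intro i
    have e : (i+1)*(n-1) + 1 = n + i*(n-1) := by
      rw [add_mul, one_mul]; omega
    rw [← Function.iterate_succ_apply' f, Nat.succ_eq_add_one, e, hnmul]
  refine ⟨fun i => f^[i*(n-1)] v, ⟨by simp, hcanrec⟩, ?_⟩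
  rintro t ⟨ht0, htr⟩
  funext i
  obtain ⟨a, ha1, ha2⟩ := key t ht0 htr i
  obtain ⟨b, hb1, hb2⟩ := key (fun i => f^[i*(n-1)] v) (by simp) hcanrec i
  show t i = f^[i*(n-1)] v
  rw [ha1, hb1]
  calc f^[a] v = f^[a] (f^[i+b] v) := by rw [hb2]
    _ = f^[a + (i + b)] v := by rw [← Function.iterate_add_apply]
    _ = f^[b + (i + a)] v := by ring_nf
    _ = f^[b] (f^[i+a] v) := by rw [← Function.iterate_add_apply]
    _ = f^[b] v := by rw [ha2]
end

section
/- Cancellation over unrolls: let f : α → α, h : γ → γ, h' : δ → δ, and g : β → β be maps on finite types, let a be a periodic point of f, x of h, y of h', and b of g. If the digraph of U(f,a) ⋆ U(h,x) is isomorphic to the digraph of U(g,b), and the digraph of U(f,a) ⋆ U(h',y) is also isomorphic to the digraph of U(g,b), then the digraphs of the unrolls U(h,x) and U(h',y) are isomorphic. -/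
universe u u' v w z

/-- A levelled system: a height function and a parent map decreasing height by one. -/
structure LSys (V : Type u) : Type u where
  ht : V → ℕ
  pr : V → V
  ht_pr : ∀ v, ht (pr v) = ht v - 1

namespace LSys

variable {V : Type u} {V' : Type u'} {W : Type v} {W' : Type w} {Z : Type z}

/-- Levelled homomorphism: preserves height and commutes with parent. -/
def IsH (S : LSys V) (T : LSys W) (φ : V → W) : Prop :=
  (∀ v, T.ht (φ v) = S.ht v) ∧ ∀ v, φ (S.pr v) = T.pr (φ v)

lemma IsH.id (S : LSys V) : S.IsH S _root_.id := ⟨fun _ => rfl, fun _ => rfl⟩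

lemma IsH.comp {S : LSys V} {T : LSys W} {U : LSys Z} {φ : V → W} {ψ : W → Z}
    (h1 : S.IsH T φ) (h2 : T.IsH U ψ) : S.IsH U (ψ ∘ φ) :=
  ⟨fun v => (h2.1 _).trans (h1.1 v), fun v => by
    simp only [Function.comp_apply, h1.2 v, h2.2]⟩

lemma IsH.symm {S : LSys V} {T : LSys W} {e : V ≃ W} (h : S.IsH T ⇑e) :
    T.IsH S ⇑e.symm := by
  constructor
  · intro w
    have := h.1 (e.symm w)
    rw [e.apply_symm_apply] at this
    exact this.symm
  · intro w
    apply e.injective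
    rw [e.apply_symm_apply, h.2, e.apply_symm_apply]

/-- Isomorphism of levelled systems. -/
def Isom (S : LSys V) (T : LSys W) : Prop := ∃ e : V ≃ W, S.IsH T ⇑e

lemma Isom.refl (S : LSys V) : S.Isom S := ⟨Equiv.refl V, fun _ => rfl, fun _ => rfl⟩

lemma Isom.symm {S : LSys V} {T : LSys W} (h : S.Isom T) : T.Isom S := by
  obtain ⟨e, he⟩ := h
  exact ⟨e.symm, he.symm⟩

lemma Isom.trans {S : LSys V} {T : LSys W} {U : LSys Z} (h1 : S.Isom T) (h2 : T.Isom U) :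
    S.Isom U := by
  obtain ⟨e, he⟩ := h1; obtain ⟨e', he'⟩ := h2
  exact ⟨e.trans e', he.comp he'⟩

/-- Number of levelled homomorphisms. -/
noncomputable def hc (S : LSys V) (T : LSys W) : ℕ := Nat.card {φ : V → W // S.IsH T φ}

/-- Number of injective levelled homomorphisms. -/
noncomputable def ic (S : LSys V) (T : LSys W) : ℕ :=
  Nat.card {φ : V → W // S.IsH T φ ∧ Function.Injective φ}

/-- Transport of hom sets along isomorphisms on both sides. -/
def homEquiv {S : LSys V} {S' : LSys V'} {T : LSys W} {T' : LSys W'}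
    (e₁ : V ≃ V') (he₁ : S.IsH S' ⇑e₁) (e₂ : W ≃ W') (he₂ : T.IsH T' ⇑e₂) :
    {φ : V → W // S.IsH T φ} ≃ {φ : V' → W' // S'.IsH T' φ} where
  toFun φ := ⟨⇑e₂ ∘ φ.1 ∘ ⇑e₁.symm, (he₁.symm.comp φ.2).comp he₂⟩
  invFun φ := ⟨⇑e₂.symm ∘ φ.1 ∘ ⇑e₁, (he₁.comp φ.2).comp he₂.symm⟩
  left_inv φ := by
    apply Subtype.ext; funext v; simp
  right_inv φ := by
    apply Subtype.ext; funext v; simp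

lemma hc_congr {S : LSys V} {S' : LSys V'} {T : LSys W} {T' : LSys W'}
    (h1 : S.Isom S') (h2 : T.Isom T') : hc S T = hc S' T' := by
  obtain ⟨e₁, he₁⟩ := h1; obtain ⟨e₂, he₂⟩ := h2
  exact Nat.card_congr (homEquiv e₁ he₁ e₂ he₂)

lemma ic_congr {S : LSys V} {S' : LSys V'} {T : LSys W} {T' : LSys W'}
    (h1 : S.Isom S') (h2 : T.Isom T') : ic S T = ic S' T' := by
  obtain ⟨e₁, he₁⟩ := h1; obtain ⟨e₂, he₂⟩ := h2
  apply Nat.card_congr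
  refine ⟨fun φ => ⟨⇑e₂ ∘ φ.1 ∘ ⇑e₁.symm, (he₁.symm.comp φ.2.1).comp he₂,
      e₂.injective.comp (φ.2.2.comp e₁.symm.injective)⟩,
    fun φ => ⟨⇑e₂.symm ∘ φ.1 ∘ ⇑e₁, (he₁.comp φ.2.1).comp he₂.symm,
      e₂.symm.injective.comp (φ.2.2.comp e₁.injective)⟩, fun φ => ?_, fun φ => ?_⟩ <;>
  · apply Subtype.ext; funext v; simp

section Prod

variable (S : LSys V) (T : LSys W)

/-- Vertex set of the product. -/
def pV := {x : V × W // S.ht x.1 = T.ht x.2}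

/-- Product of levelled systems. -/
def prod : LSys (pV S T) where
  ht x := S.ht x.1.1
  pr x := ⟨(S.pr x.1.1, T.pr x.1.2), by rw [S.ht_pr, T.ht_pr, x.2]⟩
  ht_pr x := S.ht_pr _

lemma hc_prod (X : LSys Z) : hc X (prod S T) = hc X S * hc X T := by
  show Nat.card _ = Nat.card _ * Nat.card _
  rw [← Nat.card_prod]
  apply Nat.card_congr
  refine ⟨fun φ => (⟨fun z => (φ.1 z).1.1, ?_, ?_⟩, ⟨fun z => (φ.1 z).1.2, ?_, ?_⟩),
    fun ψ => ⟨fun z => ⟨(ψ.1.1 z, ψ.2.1 z), by rw [ψ.1.2.1, ψ.2.2.1]⟩, ?_, ?_⟩, ?_, ?_⟩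
  · exact fun z => φ.2.1 z
  · exact fun z => congrArg (fun p => p.1.1) (φ.2.2 z)
  · exact fun z => ((φ.1 z).2.symm).trans (φ.2.1 z)
  · exact fun z => congrArg (fun p => p.1.2) (φ.2.2 z)
  · exact fun z => ψ.1.2.1 z
  · intro z
    apply Subtype.ext
    exact Prod.ext (ψ.1.2.2 z) (ψ.2.2.2 z)
  · intro φ
    apply Subtype.ext; funext z; exact Subtype.ext rfl
  · intro ψ
    exact Prod.ext (Subtype.ext rfl) (Subtype.ext rfl)

end Prod

section Cut

variable (S : LSys V) (t : ℕ)

/-- Vertices of height at most `t`. -/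
def cV := {v : V // S.ht v ≤ t}

/-- Truncation at height `t`. -/
def cutS : LSys (cV S t) where
  ht x := S.ht x.1
  pr x := ⟨S.pr x.1, by rw [S.ht_pr]; have := x.2; omega⟩
  ht_pr x := S.ht_pr _

lemma Isom.cut {S : LSys V} {T : LSys W} (h : S.Isom T) (t : ℕ) :
    (cutS S t).Isom (cutS T t) := by
  obtain ⟨e, he⟩ := h
  refine ⟨⟨fun v => ⟨e v.1, by rw [he.1]; exact v.2⟩,
    fun w => ⟨e.symm w.1, by rw [he.symm.1]; exact w.2⟩, ?_, ?_⟩, ?_, ?_⟩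
  · intro v; apply Subtype.ext; simp
  · intro w; apply Subtype.ext; simp
  · intro v; exact he.1 v.1
  · intro v; apply Subtype.ext; exact he.2 v.1

lemma cut_prod_isom (S : LSys V) (T : LSys W) (t : ℕ) :
    (cutS (prod S T) t).Isom (prod (cutS S t) (cutS T t)) := by
  refine ⟨⟨fun x => ⟨(⟨x.1.1.1, x.2⟩, ⟨x.1.1.2, x.1.2 ▸ x.2⟩), x.1.2⟩,
      fun y => ⟨⟨(y.1.1.1, y.1.2.1), y.2⟩, y.1.1.2⟩, fun x => ?_, fun y => ?_⟩,
      fun x => rfl, fun x => ?_⟩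
  · apply Subtype.ext; apply Subtype.ext; rfl
  · apply Subtype.ext; exact Prod.ext (Subtype.ext rfl) (Subtype.ext rfl)
  · apply Subtype.ext; exact Prod.ext (Subtype.ext rfl) (Subtype.ext rfl)

end Cut

end LSys

namespace LSys

variable {V : Type u} {V' : Type u'} {W : Type v} {W' : Type w} {Z : Type z}

/-- A levelled congruence on a levelled system. -/
structure Cong (S : LSys V) : Type u where
  r : Setoid V
  ht_eq : ∀ {a b}, r.r a b → S.ht a = S.ht b
  pr_rel : ∀ {a b}, r.r a b → r.r (S.pr a) (S.pr b)

namespace Cong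

variable {S : LSys V}

lemma r_injective : Function.Injective (Cong.r (S := S)) := by
  rintro ⟨r1, h1, h2⟩ ⟨r2, h3, h4⟩ h
  simp only at h
  subst h
  rfl

instance [Finite V] : Finite (Cong S) := by
  have : Finite (Setoid V) := by
    apply Finite.of_injective (fun s : Setoid V => s.r)
    intro a b h
    cases a; cases b
    simp only at h
    subst h
    rfl
  exact Finite.of_injective _ r_injective

/-- Quotient vertex set. -/
def Q (θ : Cong S) : Type u := Quotient θ.r

/-- Quotient levelled system. -/
def sys (θ : Cong S) : LSys θ.Q where
  ht := Quotient.lift S.ht fun _ _ h => θ.ht_eq h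
  pr := Quotient.map S.pr fun _ _ h => θ.pr_rel h
  ht_pr := by rintro ⟨v⟩; exact S.ht_pr v

instance (θ : Cong S) [Finite V] : Finite θ.Q := Quotient.finite _

/-- The trivial (equality) congruence. -/
def eqC (S : LSys V) : Cong S where
  r := ⟨Eq, ⟨fun _ => rfl, fun h => h.symm, fun h1 h2 => h1.trans h2⟩⟩
  ht_eq := fun h => h ▸ rfl
  pr_rel := fun h => h ▸ rfl

lemma eqC_sys_isom (S : LSys V) : ((eqC S).sys).Isom S := by
  have hbij : Function.Bijective (Quotient.mk (eqC S).r) :=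
    ⟨fun a b h => Quotient.exact h, Quotient.mk_surjective⟩
  have hh : S.IsH (eqC S).sys ⇑(Equiv.ofBijective _ hbij) :=
    ⟨fun v => rfl, fun v => rfl⟩
  exact ⟨(Equiv.ofBijective _ hbij).symm, hh.symm⟩

lemma card_lt [Finite V] {θ : Cong S} (h : θ ≠ eqC S) : Nat.card θ.Q < Nat.card V := by
  have hne : ∃ a b, a ≠ b ∧ θ.r.r a b := by
    by_contra hc
    push_neg at hc
    apply h
    apply r_injective
    apply Setoid.ext
    intro a b
    constructor
    · intro hab
      by_contra hne
      exact (hc a b hne) hab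
    · rintro rfl; exact θ.r.iseqv.refl a
  obtain ⟨a, b, hab, hrel⟩ := hne
  have hsurj : Function.Surjective (Quotient.mk θ.r) := Quotient.mk_surjective
  have hle : Nat.card θ.Q ≤ Nat.card V := Nat.card_le_card_of_surjective _ hsurj
  rcases lt_or_eq_of_le hle with h' | h'
  · exact h'
  · exfalso
    have hbij : Function.Bijective (Quotient.mk θ.r) :=
      (Nat.bijective_iff_surjective_and_card _).mpr ⟨hsurj, h'.symm⟩
    exact hab (hbij.1 (Quotient.sound hrel))

end Cong

/-- The kernel congruence of a levelled homomorphism. -/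
def kerC {S : LSys V} {T : LSys W} (φ : {φ : V → W // S.IsH T φ}) : Cong S where
  r := ⟨fun a b => φ.1 a = φ.1 b, ⟨fun _ => rfl, fun h => h.symm, fun h1 h2 => h1.trans h2⟩⟩
  ht_eq := fun h => by rw [← φ.2.1, ← φ.2.1, h]
  pr_rel := fun h => by show φ.1 _ = φ.1 _; rw [φ.2.2, φ.2.2, h]

/-- Homomorphisms with kernel `θ` correspond to injective homomorphisms from the quotient. -/
def fiberEquiv {S : LSys V} {T : LSys W} (θ : Cong S) :
    {φ : {φ : V → W // S.IsH T φ} // kerC φ = θ} ≃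
      {ψ : θ.Q → W // θ.sys.IsH T ψ ∧ Function.Injective ψ} where
  toFun φp :=
    have hk : ∀ a b, θ.r.r a b ↔ φp.1.1 a = φp.1.1 b := fun a b =>
      Iff.of_eq (congrArg (fun c : Cong S => c.r.r a b) φp.2).symm
    ⟨Quotient.lift φp.1.1 (fun a b h => (hk a b).mp h),
     ⟨by rintro ⟨v⟩; exact φp.1.2.1 v,
      by rintro ⟨v⟩; exact φp.1.2.2 v⟩,
     by rintro ⟨a⟩ ⟨b⟩ h; exact Quotient.sound ((hk a b).mpr h)⟩
  invFun ψp :=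
    ⟨⟨ψp.1 ∘ Quotient.mk θ.r,
      ⟨fun v => ψp.2.1.1 (Quotient.mk θ.r v), fun v => ψp.2.1.2 (Quotient.mk θ.r v)⟩⟩,
     Cong.r_injective (Setoid.ext fun a b =>
       ⟨fun h => Quotient.exact (ψp.2.2 h), fun h => congrArg ψp.1 (Quotient.sound h)⟩)⟩
  left_inv φp := Subtype.ext (Subtype.ext (funext fun v => rfl))
  right_inv ψp := Subtype.ext (funext fun q => by obtain ⟨v⟩ := q; rfl)

lemma hc_eq_sum (X : LSys Z) [Finite Z] (T : LSys W) [Finite W] [Fintype (Cong X)] :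
    hc X T = ∑ θ : Cong X, ic θ.sys T := by
  have e1 : {φ : Z → W // X.IsH T φ} ≃ Σ θ : Cong X, {φ : {φ // X.IsH T φ} // kerC φ = θ} :=
    (Equiv.sigmaFiberEquiv kerC).symm
  rw [hc, Nat.card_congr e1]
  haveI : ∀ θ : Cong X, Fintype {φ : {φ // X.IsH T φ} // kerC φ = θ} := fun θ =>
    Fintype.ofFinite _
  rw [Nat.card_eq_fintype_card, Fintype.card_sigma]
  apply Finset.sum_congr rfl
  intro θ _
  rw [← Nat.card_eq_fintype_card, Nat.card_congr (fiberEquiv θ), ic]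

lemma ic_eq_of_hc_eq (T : LSys W) (T' : LSys W') [Finite W] [Finite W']
    (H : ∀ (Z' : Type z) (X : LSys Z'), Finite Z' → hc X T = hc X T') :
    ∀ (Z' : Type z) (X : LSys Z'), Finite Z' → ic X T = ic X T' := by
  suffices h : ∀ (n : ℕ) (Z' : Type z) (X : LSys Z'), Finite Z' → Nat.card Z' = n →
      ic X T = ic X T' by
    intro Z' X hZ; exact h (Nat.card Z') Z' X hZ rfl
  intro n
  induction n using Nat.strong_induction_on with
  | _ n IH =>
    intro Z' X hZ hcard
    haveI := hZ
    haveI : Fintype (Cong X) := Fintype.ofFinite _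
    classical
    have key : hc X T = hc X T' := H Z' X hZ
    rw [hc_eq_sum X T, hc_eq_sum X T'] at key
    rw [← Finset.add_sum_erase Finset.univ _ (Finset.mem_univ (Cong.eqC X)),
        ← Finset.add_sum_erase Finset.univ _ (Finset.mem_univ (Cong.eqC X))] at key
    have hsame : ∑ θ ∈ Finset.univ.erase (Cong.eqC X), ic θ.sys T =
        ∑ θ ∈ Finset.univ.erase (Cong.eqC X), ic θ.sys T' := by
      apply Finset.sum_congr rfl
      intro θ hθ
      have hne : θ ≠ Cong.eqC X := (Finset.mem_erase.mp hθ).1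
      exact IH (Nat.card θ.Q) (hcard ▸ Cong.card_lt hne) θ.Q θ.sys inferInstance rfl
    rw [hsame] at key
    have e1 : ic (Cong.eqC X).sys T = ic X T := ic_congr (Cong.eqC_sys_isom X) (Isom.refl T)
    have e2 : ic (Cong.eqC X).sys T' = ic X T' := ic_congr (Cong.eqC_sys_isom X) (Isom.refl T')
    omega

lemma isom_of_hc_eq {W : Type v} {W' : Type w} (T : LSys W) (T' : LSys W') [Finite W] [Finite W']
    (H1 : ∀ (Z' : Type v) (X : LSys Z'), Finite Z' → hc X T = hc X T')
    (H2 : ∀ (Z' : Type w) (X : LSys Z'), Finite Z' → hc X T = hc X T') :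
    T.Isom T' := by
  have e1 : ic T T = ic T T' := ic_eq_of_hc_eq T T' H1 W T inferInstance
  have e2 : ic T' T = ic T' T' := ic_eq_of_hc_eq T T' H2 W' T' inferInstance
  have pos1 : 0 < ic T T := by
    have : Nonempty {φ : W → W // T.IsH T φ ∧ Function.Injective φ} :=
      ⟨⟨_root_.id, IsH.id T, Function.injective_id⟩⟩
    exact Nat.card_pos
  have pos2 : 0 < ic T' T' := by
    have : Nonempty {φ : W' → W' // T'.IsH T' φ ∧ Function.Injective φ} :=
      ⟨⟨_root_.id, IsH.id T', Function.injective_id⟩⟩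
    exact Nat.card_pos
  rw [e1] at pos1
  rw [← e2] at pos2
  obtain ⟨φ, hφ, hφinj⟩ := (Nat.card_pos_iff.mp pos1).1.some
  obtain ⟨ψ, hψ, hψinj⟩ := (Nat.card_pos_iff.mp pos2).1.some
  have hcard : Nat.card W = Nat.card W' :=
    le_antisymm (Nat.card_le_card_of_injective φ hφinj) (Nat.card_le_card_of_injective ψ hψinj)
  have hbij : Function.Bijective φ :=
    (Nat.bijective_iff_injective_and_card φ).mpr ⟨hφinj, hcard⟩
  exact ⟨Equiv.ofBijective φ hbij, hφ⟩

end LSys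

open DDS DDS.InTree

section Bridge

variable {V : Type*} {V' : Type*}

/-- The levelled system underlying an in-tree. -/
noncomputable def toLS (T : InTree V) : LSys V where
  ht := T.height
  pr := T.parent
  ht_pr := by
    intro v
    by_cases hv : v = T.root
    · subst hv; rw [T.parent_root, T.height_root]
    · rw [T.height_parent hv]
      omega

lemma edge_iso_root {T : InTree V} {T' : InTree V'} (e : V ≃ V')
    (he : ∀ u v, T.Edge u v ↔ T'.Edge (e u) (e v)) : e T.root = T'.root := by
  by_contra hne
  have h2 : T'.Edge (e T.root) (e (e.symm (T'.parent (e T.root)))) := by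
    rw [e.apply_symm_apply]; exact ⟨hne, rfl⟩
  exact ((he _ _).mpr h2).1 rfl

lemma edge_iso_parent {T : InTree V} {T' : InTree V'} (e : V ≃ V')
    (he : ∀ u v, T.Edge u v ↔ T'.Edge (e u) (e v)) (v : V) :
    e (T.parent v) = T'.parent (e v) := by
  by_cases hv : v = T.root
  · subst hv
    rw [T.parent_root, edge_iso_root e he, T'.parent_root]
  · exact ((he v (T.parent v)).mp ⟨hv, rfl⟩).2

lemma edge_iso_parent_iter {T : InTree V} {T' : InTree V'} (e : V ≃ V')
    (he : ∀ u v, T.Edge u v ↔ T'.Edge (e u) (e v)) (k : ℕ) (v : V) :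
    e (T.parent^[k] v) = T'.parent^[k] (e v) := by
  induction k with
  | zero => rfl
  | succ k ih =>
      rw [Function.iterate_succ_apply', Function.iterate_succ_apply',
        edge_iso_parent e he, ih]

lemma edge_iso_height {T : InTree V} {T' : InTree V'} (e : V ≃ V')
    (he : ∀ u v, T.Edge u v ↔ T'.Edge (e u) (e v)) (v : V) :
    T'.height (e v) = T.height v := by
  unfold InTree.height
  congr 1
  ext k
  simp only [Set.mem_setOf_eq]
  rw [← edge_iso_parent_iter e he]
  constructor
  · intro hh
    apply e.injective
    rw [hh, edge_iso_root e he]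
  · intro hh
    rw [hh, edge_iso_root e he]

lemma isom_of_edge_iso {T : InTree V} {T' : InTree V'} (h : Isomorphic T.Edge T'.Edge) :
    (toLS T).Isom (toLS T') := by
  obtain ⟨e, he⟩ := h
  exact ⟨e, fun v => edge_iso_height e he v, fun v => edge_iso_parent e he v⟩

lemma edge_iso_of_isom {T : InTree V} {T' : InTree V'} (h : (toLS T).Isom (toLS T')) :
    Isomorphic T.Edge T'.Edge := by
  obtain ⟨e, hht, hpr⟩ := h
  have hht' : ∀ v, T'.height (e v) = T.height v := hht
  have hpr' : ∀ v, e (T.parent v) = T'.parent (e v) := hpr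
  have hroot : e T.root = T'.root := by
    apply T'.height_eq_zero_iff.mp
    rw [hht' T.root]
    exact T.height_root
  refine ⟨e, fun u v => ?_⟩
  constructor
  · rintro ⟨hu, rfl⟩
    exact ⟨fun hc => hu (e.injective (hc.trans hroot.symm)), hpr' u⟩
  · rintro ⟨hu, hv⟩
    refine ⟨fun hc => hu (by rw [hc, hroot]), e.injective ?_⟩
    rw [hv, hpr']

lemma star_height {V₁ V₂ : Type*} (T₁ : InTree V₁) (T₂ : InTree V₂) (x : StarVertex T₁ T₂) :
    (T₁.star T₂).height x = T₁.height x.1.1 := by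
  apply le_antisymm
  · apply Nat.sInf_le
    show (T₁.star T₂).parent^[T₁.height x.1.1] x = (T₁.star T₂).root
    apply Subtype.ext
    have hit : (((T₁.star T₂).parent)^[T₁.height x.1.1] x).1 =
        (T₁.parent^[T₁.height x.1.1] x.1.1, T₂.parent^[T₁.height x.1.1] x.1.2) :=
      starParent_iterate T₁ T₂ _ x
    rw [hit]
    have h2 : T₂.parent^[T₁.height x.1.1] x.1.2 = T₂.root := by
      rw [x.2]; exact T₂.height_spec _
    show (_, _) = (T₁.root, T₂.root)
    rw [T₁.height_spec, h2]
  · have hs := (T₁.star T₂).height_spec x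
    have hit : (((T₁.star T₂).parent)^[(T₁.star T₂).height x] x).1 =
        (T₁.parent^[(T₁.star T₂).height x] x.1.1,
         T₂.parent^[(T₁.star T₂).height x] x.1.2) :=
      starParent_iterate T₁ T₂ _ x
    rw [hs] at hit
    have h1 : T₁.parent^[(T₁.star T₂).height x] x.1.1 = T₁.root :=
      (congrArg Prod.fst hit).symm
    exact Nat.sInf_le h1

lemma unrollParent_iterate_le {α : Type*} (f : α → α) (v : α) :
    ∀ (k j : ℕ) (u : α) (h : f^[j + k] u = v),
      (unrollParent f v)^[k] ⟨(u, j + k), h⟩ =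
        ⟨(f^[k] u, j), by rw [← Function.iterate_add_apply]; exact h⟩ := by
  intro k
  induction k with
  | zero => intro j u h; rfl
  | succ k ih =>
      intro j u h
      show (unrollParent f v)^[k] (unrollParent f v ⟨(u, j + (k + 1)), h⟩) = _
      have h' : f^[j + k] (f u) = v := by
        rw [← Function.iterate_succ_apply]; exact h
      show (unrollParent f v)^[k] ⟨(f u, j + k), h'⟩ = _
      exact (ih j (f u) h').trans
        (Subtype.ext (Prod.ext (Function.iterate_succ_apply f k u).symm rfl))

lemma unrollParent_iterate_le' {α : Type*} (f : α → α) (v : α) (k i : ℕ) (u : α)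
    (h : f^[i] u = v) (hki : k ≤ i) (h2 : f^[i - k] (f^[k] u) = v) :
    (unrollParent f v)^[k] ⟨(u, i), h⟩ = ⟨(f^[k] u, i - k), h2⟩ := by
  obtain ⟨j, rfl⟩ : ∃ j, i = j + k := ⟨i - k, by omega⟩
  rw [unrollParent_iterate_le f v k j u h]
  apply Subtype.ext
  show (f^[k] u, j) = (f^[k] u, j + k - k)
  rw [Nat.add_sub_cancel]

lemma unroll_height {α : Type*} (f : α → α) (v : α) (w : UnrollVertex f v) :
    (unroll f v).height w = w.1.2 := by
  obtain ⟨⟨u, i⟩, hw⟩ := w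
  show (unroll f v).height ⟨(u, i), hw⟩ = i
  have hle : (unroll f v).height ⟨(u, i), hw⟩ ≤ i :=
    Nat.sInf_le (unrollParent_iterate f v i u hw)
  have h2 : f^[i - (unroll f v).height ⟨(u, i), hw⟩]
      (f^[(unroll f v).height ⟨(u, i), hw⟩] u) = v := by
    rw [← Function.iterate_add_apply, Nat.sub_add_cancel hle]
    exact hw
  have hs' : (unrollParent f v)^[(unroll f v).height ⟨(u, i), hw⟩] ⟨(u, i), hw⟩ =
      ⟨(v, 0), rfl⟩ := (unroll f v).height_spec ⟨(u, i), hw⟩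
  rw [unrollParent_iterate_le' f v _ i u hw hle h2] at hs'
  have hj : i - (unroll f v).height ⟨(u, i), hw⟩ = 0 := congrArg (fun z => z.1.2) hs'
  omega

lemma unroll_spine {α : Type*} (f : α → α) (a : α) {n : ℕ} (hn1 : 1 ≤ n) (hn : f^[n] a = a) :
    ∃ s : ℕ → UnrollVertex f a, (∀ k, (unroll f a).height (s k) = k) ∧
      (∀ k, (unroll f a).parent (s (k + 1)) = s k) ∧ (unroll f a).parent (s 0) = s 0 := by
  have hkn : ∀ k : ℕ, k ≤ k * n := fun k => Nat.le_mul_of_pos_right k (by omega)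
  have key : ∀ k, f^[k] (f^[k * n - k] a) = a := by
    intro k
    rw [← Function.iterate_add_apply]
    have he : k + (k * n - k) = k * n := by have := hkn k; omega
    rw [he, Nat.mul_comm k n, Function.iterate_mul]
    exact Function.iterate_fixed hn k
  refine ⟨fun k => ⟨(f^[k * n - k] a, k), key k⟩, fun k => unroll_height f a _, ?_, rfl⟩
  intro k
  show unrollParent f a ⟨(f^[(k + 1) * n - (k + 1)] a, k + 1), key (k + 1)⟩ = _
  apply Subtype.ext
  refine Prod.ext ?_ rfl
  show f (f^[(k + 1) * n - (k + 1)] a) = f^[k * n - k] a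
  rw [← Function.iterate_succ_apply' f]
  show f^[(k + 1) * n - (k + 1) + 1] a = f^[k * n - k] a
  have hexp : (k + 1) * n - (k + 1) + 1 = (k * n - k) + n := by
    have h1 := hkn k
    have h2 := hkn (k + 1)
    have h3 : (k + 1) * n = k * n + n := by ring
    omega
  rw [hexp, Function.iterate_add_apply, hn]

lemma finite_cV_unroll {α : Type*} [Finite α] (f : α → α) (a : α) (t : ℕ) :
    Finite (LSys.cV (toLS (unroll f a)) t) := by
  apply Finite.of_injective (fun w : LSys.cV (toLS (unroll f a)) t =>
    ((w.1.1.1 : α), (⟨w.1.1.2, by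
      have h1 : (unroll f a).height w.1 = w.1.1.2 := unroll_height f a w.1
      have h2 := w.2
      show w.1.1.2 < t + 1
      have : (toLS (unroll f a)).ht w.1 = (unroll f a).height w.1 := rfl
      omega⟩ : Fin (t + 1))))
  intro w w' hww
  have h1 : w.1.1.1 = w'.1.1.1 := congrArg (fun p : α × Fin (t + 1) => p.1) hww
  have h2 : w.1.1.2 = w'.1.1.2 := congrArg (fun p : α × Fin (t + 1) => (p.2 : Fin (t + 1)).1) hww
  apply Subtype.ext
  apply Subtype.ext
  exact Prod.ext h1 h2

/-- The star product agrees with the product of levelled systems. -/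
lemma star_isom_prod {V₁ V₂ : Type*} (T₁ : InTree V₁) (T₂ : InTree V₂) :
    (toLS (T₁.star T₂)).Isom (LSys.prod (toLS T₁) (toLS T₂)) := by
  refine ⟨Equiv.refl _, fun x => ?_, fun x => ?_⟩
  · show (LSys.prod (toLS T₁) (toLS T₂)).ht x = (T₁.star T₂).height x
    exact (star_height T₁ T₂ x).symm
  · exact Subtype.ext rfl

end Bridge

section Koenig

open LSys CategoryTheory

variable {V : Type u} {W : Type v}

/-- Isomorphisms between truncations at level `t`. -/
def IsoT (S : LSys V) (T : LSys W) (t : ℕ) : Type (max u v) :=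
  {e : cV S t ≃ cV T t // (cutS S t).IsH (cutS T t) ⇑e}

instance (S : LSys V) (T : LSys W) (t : ℕ) [Finite (cV S t)] [Finite (cV T t)] :
    Finite (IsoT S T t) := Subtype.finite

/-- Restriction of a truncated isomorphism to a lower level. -/
def resIso {S : LSys V} {T : LSys W} {s t : ℕ} (hst : s ≤ t) (E : IsoT S T t) : IsoT S T s := by
  refine ⟨⟨fun v => ⟨(E.1 ⟨v.1, v.2.trans hst⟩).1, ?_⟩,
    fun w => ⟨(E.1.symm ⟨w.1, w.2.trans hst⟩).1, ?_⟩, fun v => ?_, fun w => ?_⟩, fun v => ?_,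
    fun v => ?_⟩
  · have h2 : T.ht (E.1 ⟨v.1, v.2.trans hst⟩).1 = S.ht v.1 := E.2.1 ⟨v.1, v.2.trans hst⟩
    rw [h2]; exact v.2
  · have h2 : S.ht (E.1.symm ⟨w.1, w.2.trans hst⟩).1 = T.ht w.1 := E.2.symm.1 ⟨w.1, w.2.trans hst⟩
    rw [h2]; exact w.2
  · apply Subtype.ext
    show (E.1.symm ⟨(E.1 ⟨v.1, v.2.trans hst⟩).1, _⟩).1 = v.1
    exact congrArg Subtype.val (E.1.symm_apply_apply ⟨v.1, v.2.trans hst⟩)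
  · apply Subtype.ext
    show (E.1 ⟨(E.1.symm ⟨w.1, w.2.trans hst⟩).1, _⟩).1 = w.1
    exact congrArg Subtype.val (E.1.apply_symm_apply ⟨w.1, w.2.trans hst⟩)
  · exact E.2.1 ⟨v.1, v.2.trans hst⟩
  · apply Subtype.ext
    show (E.1 ⟨S.pr v.1, _⟩).1 = T.pr (E.1 ⟨v.1, _⟩).1
    exact congrArg Subtype.val (E.2.2 ⟨v.1, v.2.trans hst⟩)

/-- The inverse system of truncated isomorphisms. -/
def isoFunctor (S : LSys V) (T : LSys W) : ℕᵒᵖ ⥤ Type (max u v) where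
  obj t := IsoT S T t.unop
  map f := TypeCat.ofHom (resIso (leOfHom f.unop))
  map_id _ := rfl
  map_comp _ _ := rfl

/-- If all truncations are isomorphic, with finite levels, then the full systems are
isomorphic. -/
lemma isom_of_cut_isom (S : LSys V) (T : LSys W)
    (hfinS : ∀ t, Finite (cV S t)) (hfinT : ∀ t, Finite (cV T t))
    (hiso : ∀ t, (cutS S t).Isom (cutS T t)) : S.Isom T := by
  haveI := hfinS; haveI := hfinT
  obtain ⟨u, hu⟩ := @nonempty_sections_of_finite_inverse_system ℕ _ _ (isoFunctor S T)
    (fun j => by haveI := hfinS j.unop; haveI := hfinT j.unop;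
                 exact inferInstanceAs (Finite (IsoT S T j.unop)))
    (fun j => by obtain ⟨e, he⟩ := hiso j.unop; exact ⟨⟨e, he⟩⟩)
  set E : ∀ t : ℕ, IsoT S T t := fun t => u (Opposite.op t) with hE
  have coh : ∀ {s t : ℕ} (hst : s ≤ t), resIso hst (E t) = E s := by
    intro s t hst
    exact hu (homOfLE hst).op
  have cohv : ∀ {s t : ℕ} (hst : s ≤ t) (v : V) (hv : S.ht v ≤ s),
      ((E t).1 ⟨v, hv.trans hst⟩).1 = ((E s).1 ⟨v, hv⟩).1 := by
    intro s t hst v hv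
    exact congrArg (fun z : IsoT S T s => (z.1 ⟨v, hv⟩).1) (coh hst)
  have cohw : ∀ {s t : ℕ} (hst : s ≤ t) (w : W) (hw : T.ht w ≤ s),
      ((E t).1.symm ⟨w, hw.trans hst⟩).1 = ((E s).1.symm ⟨w, hw⟩).1 := by
    intro s t hst w hw
    exact congrArg (fun z : IsoT S T s => (z.1.symm ⟨w, hw⟩).1) (coh hst)
  set φ : V → W := fun v => ((E (S.ht v)).1 ⟨v, le_refl _⟩).1 with hφ
  set ψ : W → V := fun w => ((E (T.ht w)).1.symm ⟨w, le_refl _⟩).1 with hψ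
  have cohφ : ∀ (t : ℕ) (v : V) (hv : S.ht v ≤ t), ((E t).1 ⟨v, hv⟩).1 = φ v := by
    intro t v hv
    exact cohv hv v (le_refl _)
  have cohψ : ∀ (t : ℕ) (w : W) (hw : T.ht w ≤ t), ((E t).1.symm ⟨w, hw⟩).1 = ψ w := by
    intro t w hw
    exact cohw hw w (le_refl _)
  have hhtφ : ∀ v, T.ht (φ v) = S.ht v := fun v => (E (S.ht v)).2.1 ⟨v, le_refl _⟩
  have hhtψ : ∀ w, S.ht (ψ w) = T.ht w := fun w => (E (T.ht w)).2.symm.1 ⟨w, le_refl _⟩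
  have hleft : ∀ v, ψ (φ v) = v := by
    intro v
    have hw : T.ht (φ v) ≤ S.ht v := le_of_eq (hhtφ v)
    calc ψ (φ v) = ((E (S.ht v)).1.symm ⟨φ v, hw⟩).1 := (cohψ _ _ hw).symm
      _ = v := congrArg Subtype.val ((E (S.ht v)).1.symm_apply_apply ⟨v, le_refl _⟩)
  have hright : ∀ w, φ (ψ w) = w := by
    intro w
    have hv : S.ht (ψ w) ≤ T.ht w := le_of_eq (hhtψ w)
    calc φ (ψ w) = ((E (T.ht w)).1 ⟨ψ w, hv⟩).1 := (cohφ _ _ hv).symm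
      _ = w := congrArg Subtype.val ((E (T.ht w)).1.apply_symm_apply ⟨w, le_refl _⟩)
  have hpr : ∀ v, φ (S.pr v) = T.pr (φ v) := by
    intro v
    have hle : S.ht (S.pr v) ≤ S.ht v := by rw [S.ht_pr]; omega
    calc φ (S.pr v) = ((E (S.ht v)).1 ⟨S.pr v, hle⟩).1 := (cohφ _ _ hle).symm
      _ = T.pr (φ v) := congrArg Subtype.val ((E (S.ht v)).2.2 ⟨v, le_refl _⟩)
  exact ⟨⟨φ, ψ, hleft, hright⟩, hhtφ, hpr⟩

end Koenig

section Cancel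

open LSys

lemma cut_hc_cancel {α γ δ β : Type*} [Finite α] [Finite γ] [Finite δ] [Finite β]
    (f : α → α) (h : γ → γ) (h' : δ → δ) (g : β → β)
    (a : α) (x : γ) (y : δ) (b : β)
    (ha : ∃ n, 1 ≤ n ∧ f^[n] a = a)
    (h1 : Isomorphic ((unroll f a).star (unroll h x)).Edge (unroll g b).Edge)
    (h2 : Isomorphic ((unroll f a).star (unroll h' y)).Edge (unroll g b).Edge)
    (t : ℕ) {Z' : Type z} (X : LSys Z') (hX : Finite Z') :
    hc X (cutS (toLS (unroll h x)) t) = hc X (cutS (toLS (unroll h' y)) t) := by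
  haveI := hX
  set A := toLS (unroll f a) with hA
  set B := toLS (unroll h x) with hB
  set C := toLS (unroll h' y) with hC
  set D := toLS (unroll g b) with hD
  haveI : Finite (cV A t) := finite_cV_unroll f a t
  haveI : Finite (cV B t) := finite_cV_unroll h x t
  haveI : Finite (cV C t) := finite_cV_unroll h' y t
  have i1 : (LSys.prod A B).Isom D :=
    ((star_isom_prod (unroll f a) (unroll h x)).symm).trans (isom_of_edge_iso h1)
  have i2 : (LSys.prod A C).Isom D :=
    ((star_isom_prod (unroll f a) (unroll h' y)).symm).trans (isom_of_edge_iso h2)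
  have i1t : (LSys.prod (cutS A t) (cutS B t)).Isom (cutS D t) :=
    (cut_prod_isom A B t).symm.trans (i1.cut t)
  have i2t : (LSys.prod (cutS A t) (cutS C t)).Isom (cutS D t) :=
    (cut_prod_isom A C t).symm.trans (i2.cut t)
  by_cases hhigh : ∃ z0, X.ht z0 > t
  · obtain ⟨z0, hz0⟩ := hhigh
    have e1 : hc X (cutS B t) = 0 := by
      haveI : IsEmpty {φ : Z' → cV B t // X.IsH (cutS B t) φ} := ⟨fun φ => by
        have hhh : B.ht (φ.1 z0).1 = X.ht z0 := φ.2.1 z0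
        have := (φ.1 z0).2
        omega⟩
      exact Nat.card_of_isEmpty
    have e2 : hc X (cutS C t) = 0 := by
      haveI : IsEmpty {φ : Z' → cV C t // X.IsH (cutS C t) φ} := ⟨fun φ => by
        have hhh : C.ht (φ.1 z0).1 = X.ht z0 := φ.2.1 z0
        have := (φ.1 z0).2
        omega⟩
      exact Nat.card_of_isEmpty
    rw [e1, e2]
  · push_neg at hhigh
    have hposA : hc X (cutS A t) ≠ 0 := by
      obtain ⟨n, hn1, hnfix⟩ := ha
      obtain ⟨s, hs1, hs2, hs3⟩ := unroll_spine f a hn1 hnfix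
      have mem : ∀ z0 : Z', A.ht (s (X.ht z0)) ≤ t := fun z0 => by
        have hm : A.ht (s (X.ht z0)) = X.ht z0 := hs1 (X.ht z0)
        rw [hm]; exact hhigh z0
      have hne : Nonempty {φ : Z' → cV A t // X.IsH (cutS A t) φ} := by
        refine ⟨⟨fun z0 => ⟨s (X.ht z0), mem z0⟩, fun z0 => ?_, fun z0 => ?_⟩⟩
        · exact hs1 (X.ht z0)
        · apply Subtype.ext
          show s (X.ht (X.pr z0)) = A.pr (s (X.ht z0))
          have hhp : X.ht (X.pr z0) = X.ht z0 - 1 := X.ht_pr z0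
          rcases hz : X.ht z0 with _ | k
          · rw [hhp, hz]
            exact hs3.symm
          · rw [hhp, hz]
            exact (hs2 k).symm
      have hpos : 0 < hc X (cutS A t) := Nat.card_pos
      omega
    have meq : hc X (cutS A t) * hc X (cutS B t) = hc X (cutS A t) * hc X (cutS C t) := by
      rw [← hc_prod (cutS A t) (cutS B t) X, ← hc_prod (cutS A t) (cutS C t) X,
        hc_congr (Isom.refl X) i1t, hc_congr (Isom.refl X) i2t]
    exact Nat.eq_of_mul_eq_mul_left (Nat.pos_of_ne_zero hposA) meq

end Cancel

open DDS DDS.InTree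


/-- Cancellation over unrolls: if `U(f,a) ⋆ U(h,x) ≅ U(g,b)` and `U(f,a) ⋆ U(h',y) ≅ U(g,b)`,
then `U(h,x) ≅ U(h',y)`. -/
theorem unroll_cancellation {α γ δ β : Type*} [Fintype α] [Fintype γ] [Fintype δ] [Fintype β]
    (f : α → α) (h : γ → γ) (h' : δ → δ) (g : β → β)
    (a : α) (x : γ) (y : δ) (b : β)
    (ha : ∃ n, 1 ≤ n ∧ f^[n] a = a) (hx : ∃ n, 1 ≤ n ∧ h^[n] x = x)
    (hy : ∃ n, 1 ≤ n ∧ h'^[n] y = y) (hb : ∃ n, 1 ≤ n ∧ g^[n] b = b)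
    (h1 : Isomorphic ((unroll f a).star (unroll h x)).Edge (unroll g b).Edge)
    (h2 : Isomorphic ((unroll f a).star (unroll h' y)).Edge (unroll g b).Edge) :
    Isomorphic (unroll h x).Edge (unroll h' y).Edge := by
  have hfB : ∀ t, Finite (LSys.cV (toLS (unroll h x)) t) := fun t => finite_cV_unroll h x t
  have hfC : ∀ t, Finite (LSys.cV (toLS (unroll h' y)) t) := fun t => finite_cV_unroll h' y t
  have cutIso : ∀ t, (LSys.cutS (toLS (unroll h x)) t).Isom (LSys.cutS (toLS (unroll h' y)) t) := by
    intro t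
    haveI := hfB t; haveI := hfC t
    apply LSys.isom_of_hc_eq
    · intro Z' X hX
      exact cut_hc_cancel f h h' g a x y b ha h1 h2 t X hX
    · intro Z' X hX
      exact cut_hc_cancel f h h' g a x y b ha h1 h2 t X hX
  exact edge_iso_of_isom (isom_of_cut_isom _ _ hfB hfC cutIso)
end

section
/- Upper bound on solutions of the inequality A × X ⊇ B: let f : α → α and g : β → β be connected FGs on finite nonempty types and let p ≥ 1. Then for every m : ℕ and every family of FGs hᵢ : γᵢ → γᵢ (i = 1, …, m) on finite nonempty types such that each hᵢ is connected, each hᵢ has exactly p periodic points, each product FG f × hᵢ contains g (i.e., there is an injection e : β → α × γᵢ with e ∘ g = (f × hᵢ) ∘ e whose range is closed under preimages of f × hᵢ), and the hᵢ are pairwise non-isomorphic as FGs, one has m ≤ (the number of periodic points of f). -/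
open DDS DDS.InTree

namespace UB
open DDS DDS.InTree Function

variable {V V' V'' W : Type*}

/-- Strict homomorphisms: commute with parent and preserve heights. -/
def SHom (T : InTree V) (T' : InTree V') (τ : V → V') : Prop :=
  (∀ v, τ (T.parent v) = T'.parent (τ v)) ∧ (∀ v, T'.height (τ v) = T.height v)

lemma SHom.id (T : InTree V) : SHom T T id := ⟨fun _ => rfl, fun _ => rfl⟩

lemma SHom.comp {T : InTree V} {T' : InTree V'} {T'' : InTree V''} {τ : V → V'} {σ : V' → V''}
    (h1 : SHom T T' τ) (h2 : SHom T' T'' σ) : SHom T T'' (σ ∘ τ) :=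
  ⟨fun v => by simp [h1.1 v, h2.1 (τ v)], fun v => by simp [h2.2 (τ v), h1.2 v]⟩

lemma SHom.iterate {T : InTree V} {T' : InTree V'} {τ : V → V'} (h : SHom T T' τ) (k : ℕ) :
    ∀ v, τ (T.parent^[k] v) = T'.parent^[k] (τ v) := by
  induction k with
  | zero => intro v; rfl
  | succ k ih => intro v; rw [Function.iterate_succ_apply, Function.iterate_succ_apply, ih, h.1]

lemma SHom.root {T : InTree V} {T' : InTree V'} {τ : V → V'} (h : SHom T T' τ) :
    τ T.root = T'.root := by
  have := h.2 T.root
  rw [height_root] at this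
  exact (height_eq_zero_iff T').mp this

/-- Strict isomorphisms of in-trees. -/
structure SIso (T : InTree V) (T' : InTree V') where
  e : V ≃ V'
  hom : SHom T T' e

namespace SIso
variable {T : InTree V} {T' : InTree V'} {T'' : InTree V''}

lemma hom_symm (I : SIso T T') : SHom T' T I.e.symm := by
  constructor
  · intro v
    apply I.e.injective
    rw [Equiv.apply_symm_apply]
    have := I.hom.1 (I.e.symm v)
    rw [Equiv.apply_symm_apply] at this
    exact this.symm
  · intro v
    conv_rhs => rw [← Equiv.apply_symm_apply I.e v]
    rw [I.hom.2]

def refl (T : InTree V) : SIso T T := ⟨Equiv.refl V, SHom.id T⟩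

def symm (I : SIso T T') : SIso T' T := ⟨I.e.symm, I.hom_symm⟩

def trans (I : SIso T T') (J : SIso T' T'') : SIso T T'' :=
  ⟨I.e.trans J.e, I.hom.comp J.hom⟩

end SIso

noncomputable def cnt (T : InTree V) (T' : InTree V') : ℕ :=
  Nat.card {τ : V → V' // SHom T T' τ}

noncomputable def icnt (T : InTree V) (T' : InTree V') : ℕ :=
  Nat.card {τ : V → V' // SHom T T' τ ∧ Function.Injective τ}

/-- Precomposition with an iso. -/
def precompEquiv {T : InTree V} {T' : InTree V'} (I : SIso T T') (Z : InTree W)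
    (P : (V → W) → Prop) (P' : (V' → W) → Prop)
    (hP : ∀ τ, P' τ ↔ P (τ ∘ I.e)) :
    {τ : V' → W // P' τ} ≃ {τ : V → W // P τ} where
  toFun σ := ⟨σ.1 ∘ I.e, (hP σ.1).mp σ.2⟩
  invFun τ := ⟨τ.1 ∘ I.e.symm, (hP _).mpr (by
    have : (τ.1 ∘ I.e.symm) ∘ I.e = τ.1 := by
      funext v; simp
    rw [this]; exact τ.2)⟩
  left_inv σ := by
    apply Subtype.ext; funext v; simp
  right_inv τ := by
    apply Subtype.ext; funext v; simp

lemma cnt_congr_left {T : InTree V} {T' : InTree V'} (I : SIso T T') (Z : InTree W) :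
    cnt T Z = cnt T' Z := by
  unfold cnt
  apply Nat.card_congr
  exact (precompEquiv I Z (fun τ => SHom T Z τ) (fun τ => SHom T' Z τ)
    (fun τ => ⟨fun h => (I.hom.comp h), fun h => by
      have := (I.symm).hom.comp h
      have heq : (τ ∘ ↑I.e) ∘ ↑I.symm.e = τ := by funext v; simp [SIso.symm]
      rwa [heq] at this⟩)).symm

lemma icnt_congr_left {T : InTree V} {T' : InTree V'} (I : SIso T T') (Z : InTree W) :
    icnt T Z = icnt T' Z := by
  unfold icnt
  apply Nat.card_congr
  refine (precompEquiv I Z _ _ (fun τ => ?_)).symm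
  constructor
  · rintro ⟨h1, h2⟩
    exact ⟨I.hom.comp h1, h2.comp I.e.injective⟩
  · rintro ⟨h1, h2⟩
    have h1' := (I.symm).hom.comp h1
    have heq : (τ ∘ ↑I.e) ∘ ↑I.symm.e = τ := by funext v; simp [SIso.symm]
    rw [heq] at h1'
    refine ⟨h1', fun a b hab => ?_⟩
    have : (τ ∘ I.e) (I.e.symm a) = (τ ∘ I.e) (I.e.symm b) := by simpa using hab
    have := h2 this
    simpa using this

lemma cnt_congr_right (T : InTree V) {Z : InTree V'} {Z' : InTree W} (I : SIso Z Z') :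
    cnt T Z = cnt T Z' := by
  unfold cnt
  apply Nat.card_congr
  refine ⟨fun τ => ⟨I.e ∘ τ.1, τ.2.comp I.hom⟩, fun σ => ⟨I.e.symm ∘ σ.1, σ.2.comp I.hom_symm⟩,
    fun τ => ?_, fun σ => ?_⟩ <;> (apply Subtype.ext; funext v; simp)

/-! ### Heights under iteration -/

lemma parent_iterate_root (T : InTree V) (d : ℕ) : T.parent^[d] T.root = T.root := by
  induction d with
  | zero => rfl
  | succ d ih => rw [Function.iterate_succ_apply, T.parent_root, ih]

lemma height_iterate (T : InTree V) (v : V) (k : ℕ) (hk : k ≤ T.height v) :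
    T.height (T.parent^[k] v) = T.height v - k := by
  induction k with
  | zero => simp
  | succ k ih =>
    have hk' : k ≤ T.height v := by omega
    rw [Function.iterate_succ_apply']
    have hne : T.parent^[k] v ≠ T.root := by
      intro hroot
      have h0 : T.height (T.parent^[k] v) = 0 := by rw [hroot]; simp
      rw [ih hk'] at h0; omega
    have h1 := T.height_parent hne
    rw [ih hk'] at h1
    omega

/-! ### Star heights and counting -/

section StarCnt
variable {V₁ V₂ : Type*} (A : InTree V₁) (B : InTree V₂)

lemma star_height (x : StarVertex A B) : (star A B).height x = A.height x.1.1 := by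
  apply le_antisymm
  · apply Nat.sInf_le
    show (star A B).parent^[A.height x.1.1] x = (star A B).root
    apply Subtype.ext
    have h1 : ((starParent A B)^[A.height x.1.1] x).1
        = (A.parent^[A.height x.1.1] x.1.1, B.parent^[A.height x.1.1] x.1.2) :=
      starParent_iterate A B _ x
    have hb : B.parent^[A.height x.1.1] x.1.2 = B.root := by
      rw [x.2]; exact B.height_spec _
    show ((starParent A B)^[A.height x.1.1] x).1 = (A.root, B.root)
    rw [h1, A.height_spec, hb]
  · apply Nat.sInf_le
    have hmem := (star A B).height_spec x
    have h0 : ((starParent A B)^[(star A B).height x] x).1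
        = (A.parent^[(star A B).height x] x.1.1, B.parent^[(star A B).height x] x.1.2) :=
      starParent_iterate A B _ x
    have h2 : ((starParent A B)^[(star A B).height x] x).1 = (A.root, B.root) := by
      rw [show (starParent A B)^[(star A B).height x] x = (star A B).root from hmem]
      rfl
    rw [h0] at h2
    exact (Prod.mk.injEq _ _ _ _).mp h2 |>.1

lemma star_parent_fst (x : StarVertex A B) :
    ((star A B).parent x).1 = (A.parent x.1.1, B.parent x.1.2) := rfl

def starHomEquiv (T : InTree V) :
    {τ : V → StarVertex A B // SHom T (star A B) τ} ≃
      ({τ : V → V₁ // SHom T A τ} × {τ : V → V₂ // SHom T B τ}) where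
  toFun τ :=
    (⟨fun v => (τ.1 v).1.1,
      ⟨fun v => by
        have h := congrArg (fun y => y.1.1) (τ.2.1 v)
        simpa [star_parent_fst] using h,
       fun v => by rw [← star_height A B (τ.1 v)]; exact τ.2.2 v⟩⟩,
     ⟨fun v => (τ.1 v).1.2,
      ⟨fun v => by
        have h := congrArg (fun y => y.1.2) (τ.2.1 v)
        simpa [star_parent_fst] using h,
       fun v => by
        rw [show B.height (τ.1 v).1.2 = A.height (τ.1 v).1.1 from ((τ.1 v).2).symm,
          ← star_height A B (τ.1 v)]
        exact τ.2.2 v⟩⟩)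
  invFun σ :=
    ⟨fun v => ⟨(σ.1.1 v, σ.2.1 v), by rw [σ.1.2.2 v, σ.2.2.2 v]⟩,
     ⟨fun v => by
        apply Subtype.ext
        show (σ.1.1 (T.parent v), σ.2.1 (T.parent v)) = _
        erw [star_parent_fst]
        exact Prod.ext (σ.1.2.1 v) (σ.2.2.1 v),
      fun v => by erw [star_height]; exact σ.1.2.2 v⟩⟩
  left_inv τ := Subtype.ext (funext fun v => Subtype.ext rfl)
  right_inv σ := rfl

lemma cnt_star (T : InTree V) : cnt T (star A B) = cnt T A * cnt T B := by
  unfold cnt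
  rw [Nat.card_congr (starHomEquiv A B T), Nat.card_prod]

end StarCnt

/-! ### Positivity of counts -/

lemma cnt_pos {V₁ : Type*} [Finite V] [Finite V₁] (T : InTree V) (A : InTree V₁) (H : ℕ)
    (hAtop : ∃ v, A.height v = H) (hT : ∀ v, T.height v ≤ H) :
    1 ≤ cnt T A := by
  obtain ⟨vH, hvH⟩ := hAtop
  set τ : V → V₁ := fun v => A.parent^[H - T.height v] vH with hτ
  have hheights : ∀ v, A.height (τ v) = T.height v := fun v => by
    rw [hτ]; simp only
    rw [height_iterate A vH _ (by rw [hvH]; omega), hvH]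
    have := hT v; omega
  have hhom : SHom T A τ := by
    refine ⟨fun v => ?_, hheights⟩
    by_cases hv : v = T.root
    · subst hv
      rw [T.parent_root]
      have hroot : τ T.root = A.root := (height_eq_zero_iff A).mp (by rw [hheights]; simp)
      rw [hroot, A.parent_root]
    · have h1 : T.height v = T.height (T.parent v) + 1 := T.height_parent hv
      have h2 : T.height v ≤ H := hT v
      rw [hτ]; simp only
      have h3 : H - T.height (T.parent v) = (H - T.height v) + 1 := by omega
      rw [h3, Function.iterate_succ_apply']
  have hne : Nonempty {τ : V → V₁ // SHom T A τ} := ⟨⟨τ, hhom⟩⟩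
  have hcard : Nat.card {τ : V → V₁ // SHom T A τ} ≠ 0 :=
    Nat.card_ne_zero.mpr ⟨hne, inferInstance⟩
  unfold cnt; omega

/-! ### Cut heights -/

lemma cut_height (T : InTree V) (t : ℕ) (x : CutVertex T t) :
    (cut T t).height x = T.height x.1 := by
  unfold InTree.height
  congr 1
  ext k
  constructor
  · intro hk
    have := congrArg Subtype.val hk
    rwa [show ((cut T t).parent^[k] x).1 = T.parent^[k] x.1 from cutParent_iterate T t k x]
      at this
  · intro hk
    apply Subtype.ext
    rw [show ((cut T t).parent^[k] x).1 = T.parent^[k] x.1 from cutParent_iterate T t k x]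
    exact hk

/-- Lift an iso to cuts. -/
def cutIso {V₁ V₂ : Type*} {T₁ : InTree V₁} {T₂ : InTree V₂} (I : SIso T₁ T₂) (t : ℕ) :
    SIso (cut T₁ t) (cut T₂ t) where
  e := { toFun := fun x => ⟨I.e x.1, by rw [I.hom.2 x.1]; exact x.2⟩
         invFun := fun x => ⟨I.e.symm x.1, by rw [I.hom_symm.2 x.1]; exact x.2⟩
         left_inv := fun x => Subtype.ext (by simp)
         right_inv := fun x => Subtype.ext (by simp) }
  hom := by
    constructor
    · intro v
      apply Subtype.ext
      exact I.hom.1 v.1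
    · intro v
      show (cut T₂ t).height _ = _
      rw [cut_height, cut_height]
      exact I.hom.2 v.1

/-- Cut commutes with star. -/
def cutStarIso {V₁ V₂ : Type*} (A : InTree V₁) (B : InTree V₂) (t : ℕ) :
    SIso (cut (star A B) t) (star (cut A t) (cut B t)) where
  e := { toFun := fun x =>
          ⟨(⟨x.1.1.1, by rw [← star_height A B x.1]; exact x.2⟩,
            ⟨x.1.1.2, by rw [← x.1.2, ← star_height A B x.1]; exact x.2⟩, ), by
            show (cut A t).height _ = (cut B t).height _
            rw [cut_height, cut_height]
            exact x.1.2⟩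
         invFun := fun y =>
          ⟨⟨(y.1.1.1, y.1.2.1), by
              have := y.2
              rw [cut_height, cut_height] at this
              exact this⟩, by
            erw [star_height]
            exact y.1.1.2⟩
         left_inv := fun x => by
           apply Subtype.ext; apply Subtype.ext; rfl
         right_inv := fun y => by
           apply Subtype.ext
           apply Prod.ext <;> (apply Subtype.ext; rfl) }
  hom := by
    constructor
    · intro x
      apply Subtype.ext
      apply Prod.ext <;> (apply Subtype.ext; rfl)
    · intro x
      show (star (cut A t) (cut B t)).height _ = (cut (star A B) t).height x
      rw [star_height, cut_height, cut_height, star_height]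
      rfl
  
/-! ### Unroll heights -/

section Unr
variable {α : Type*} (f : α → α) (v : α)

lemma unroll_iterate :
    ∀ (s k : ℕ) (u : α) (h : f^[k+s] u = v),
      ((unrollParent f v)^[s] ⟨(u, k+s), h⟩).1 = (f^[s] u, k) := by
  intro s
  induction s with
  | zero => intro k u h; rfl
  | succ s ih =>
    intro k u h
    show ((unrollParent f v)^[s] (unrollParent f v ⟨(u, k + (s+1)), h⟩)).1 = _
    have hstep : unrollParent f v ⟨(u, k+s+1), h⟩
        = ⟨(f u, k+s), by rw [← Function.iterate_succ_apply]; exact h⟩ := rfl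
    erw [show (⟨(u, k + (s+1)), h⟩ : UnrollVertex f v) = ⟨(u, k+s+1), h⟩ from rfl, hstep,
      ih k (f u) _, ← Function.iterate_succ_apply]

lemma unroll_iterate' (s : ℕ) : ∀ (x : UnrollVertex f v), s ≤ x.1.2 →
    ((unrollParent f v)^[s] x).1 = (f^[s] x.1.1, x.1.2 - s) := by
  induction s with
  | zero => intro x _; simp
  | succ s ih =>
    rintro ⟨⟨u, i⟩, hx⟩ hs
    simp only at hs
    match i, hx, hs with
    | (i'+1), hx, hs =>
      show ((unrollParent f v)^[s] (unrollParent f v ⟨(u, i'+1), hx⟩)).1 = _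
      erw [show unrollParent f v ⟨(u, i'+1), hx⟩
          = (⟨(f u, i'), by rw [← Function.iterate_succ_apply]; exact hx⟩ : UnrollVertex f v) from rfl]
      erw [ih ⟨(f u, i'), by rw [← Function.iterate_succ_apply]; exact hx⟩ (by show s ≤ i'; omega)]
      simp only
      rw [← Function.iterate_succ_apply]
      congr 1
      omega

lemma unroll_height (x : UnrollVertex f v) : (unroll f v).height x = x.1.2 := by
  apply le_antisymm
  · apply Nat.sInf_le
    obtain ⟨⟨u, i⟩, hx⟩ := x
    exact (show (unroll f v).parent^[i] _ = _ from unrollParent_iterate f v i u hx)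
  · set s := (unroll f v).height x with hs
    have hspec : (unroll f v).parent^[s] x = (unroll f v).root := height_spec _ _
    by_contra hlt
    push_neg at hlt
    have h1 := unroll_iterate' f v s x (le_of_lt hlt)
    rw [show (unroll f v).parent = unrollParent f v from rfl] at hspec
    rw [hspec] at h1
    have h2 : (0:ℕ) = x.1.2 - s := congrArg Prod.snd h1
    omega

instance [Finite α] (t : ℕ) : Finite (CutVertex (unroll f v) t) := by
  refine Finite.of_injective (β := α × Fin (t+1))
    (fun x => (x.1.1.1, ⟨x.1.1.2, by
      have h := x.2
      rw [unroll_height] at h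
      omega⟩)) ?_
  intro a b hab
  apply Subtype.ext
  apply Subtype.ext
  have h1 := congrArg Prod.fst hab
  have h2 := congrArg (fun y => (y.2 : ℕ)) hab
  exact Prod.ext h1 h2

end Unr

/-! ### Quotient trees -/

section QuotTree
variable (T : InTree V)

def Compat (s : Setoid V) : Prop :=
  (∀ a b, s.r a b → s.r (T.parent a) (T.parent b)) ∧ (∀ a b, s.r a b → T.height a = T.height b)

variable (s : Setoid V) (hs : Compat T s)

def qParent : Quotient s → Quotient s :=
  Quotient.map T.parent (hs.1)

lemma qParent_iterate (k : ℕ) (a : V) :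
    (qParent T s hs)^[k] (Quotient.mk s a) = Quotient.mk s (T.parent^[k] a) := by
  induction k generalizing a with
  | zero => rfl
  | succ k ih =>
    rw [Function.iterate_succ_apply, Function.iterate_succ_apply]
    rw [show qParent T s hs (Quotient.mk s a) = Quotient.mk s (T.parent a) from rfl]
    exact ih (T.parent a)

def qTree : InTree (Quotient s) where
  root := Quotient.mk s T.root
  parent := qParent T s hs
  parent_root := by
    rw [show qParent T s hs (Quotient.mk s T.root) = Quotient.mk s (T.parent T.root) from rfl,
      T.parent_root]
  reaches_root := by
    intro x
    induction x using Quotient.ind with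
    | _ a =>
      exact ⟨T.height a, by rw [qParent_iterate, T.height_spec]⟩

lemma qTree_height (a : V) : (qTree T s hs).height (Quotient.mk s a) = T.height a := by
  apply le_antisymm
  · apply Nat.sInf_le
    show (qTree T s hs).parent^[T.height a] _ = _
    rw [show (qTree T s hs).parent = qParent T s hs from rfl, qParent_iterate, T.height_spec]
    rfl
  · set k := (qTree T s hs).height (Quotient.mk s a) with hk
    have hspec := height_spec (qTree T s hs) (Quotient.mk s a)
    rw [← hk] at hspec
    rw [show (qTree T s hs).parent = qParent T s hs from rfl, qParent_iterate] at hspec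
    have hrel : s.r (T.parent^[k] a) T.root := Quotient.exact hspec
    have hh : T.height (T.parent^[k] a) = 0 := by
      rw [hs.2 _ _ hrel]; simp
    have hroot : T.parent^[k] a = T.root := (height_eq_zero_iff T).mp hh
    exact Nat.sInf_le hroot

lemma qmk_shom : SHom T (qTree T s hs) (Quotient.mk s) :=
  ⟨fun _ => rfl, fun a => qTree_height T s hs a⟩

end QuotTree

/-! ### Hom decomposition over kernels -/

section Decomp
variable [Finite V] (T : InTree V) {W : Type*} (Z : InTree W)

instance : Finite (Setoid V) :=
  Finite.of_injective (fun s : Setoid V => s.r)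
    (fun a b h => Setoid.ext fun x y => iff_of_eq (congrFun (congrFun h x) y))

noncomputable instance : Fintype {s : Setoid V // Compat T s} := Fintype.ofFinite _

def fiberEquiv (s : Setoid V) (hs : Compat T s) :
    {τ : V → W // SHom T Z τ ∧ Setoid.ker τ = s} ≃
      {σ : Quotient s → W // SHom (qTree T s hs) Z σ ∧ Function.Injective σ} where
  toFun τ :=
    ⟨Quotient.lift τ.1 (fun a b hab => by
        have : (Setoid.ker τ.1).r a b := by rw [τ.2.2]; exact hab
        exact this),
     by
      constructor
      · constructor
        · intro x
          induction x using Quotient.ind with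
          | _ a =>
            show Quotient.lift τ.1 _ (Quotient.mk s (T.parent a)) = Z.parent (τ.1 a)
            exact τ.2.1.1 a
        · intro x
          induction x using Quotient.ind with
          | _ a =>
            show Z.height (τ.1 a) = (qTree T s hs).height (Quotient.mk s a)
            rw [qTree_height]
            exact τ.2.1.2 a
      · intro x y hxy
        induction x using Quotient.ind with
        | _ a =>
        induction y using Quotient.ind with
        | _ b =>
          apply Quotient.sound
          have : (Setoid.ker τ.1).r a b := hxy
          rw [τ.2.2] at this
          exact this⟩
  invFun σ :=
    ⟨σ.1 ∘ Quotient.mk s,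
     ⟨(qmk_shom T s hs).comp σ.2.1,
      Setoid.ext fun a b => by
        constructor
        · intro hab
          have := σ.2.2 hab
          exact Quotient.exact this
        · intro hab
          show σ.1 (Quotient.mk s a) = σ.1 (Quotient.mk s b)
          rw [Quotient.sound hab]⟩⟩
  left_inv τ := Subtype.ext (funext fun a => rfl)
  right_inv σ := Subtype.ext (funext fun x => by
    induction x using Quotient.ind with
    | _ a => rfl)

noncomputable def kerMap : {τ : V → W // SHom T Z τ} → {s : Setoid V // Compat T s} :=
  fun τ => ⟨Setoid.ker τ.1,
    ⟨fun a b hab => by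
      show τ.1 (T.parent a) = τ.1 (T.parent b)
      rw [τ.2.1 a, τ.2.1 b]
      exact congrArg Z.parent hab,
     fun a b hab => by
      rw [← τ.2.2 a, ← τ.2.2 b]
      exact congrArg Z.height hab⟩⟩

lemma cnt_decomp [Finite W] :
    cnt T Z = ∑ s : {s : Setoid V // Compat T s}, icnt (qTree T s.1 s.2) Z := by
  classical
  unfold cnt icnt
  rw [Nat.card_congr (Equiv.sigmaFiberEquiv (kerMap T Z)).symm]
  haveI : ∀ y : {s : Setoid V // Compat T s}, Fintype {x // kerMap T Z x = y} := fun y =>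
    Fintype.ofFinite _
  rw [Nat.card_eq_fintype_card, Fintype.card_sigma]
  apply Finset.sum_congr rfl
  intro y _
  rw [← Nat.card_eq_fintype_card]
  apply Nat.card_congr
  refine (Equiv.trans ?_ (fiberEquiv T Z y.1 y.2))
  refine ⟨fun x => ⟨x.1.1, x.1.2, ?_⟩, fun τ => ⟨⟨τ.1, τ.2.1⟩, ?_⟩, fun x => ?_, fun τ => ?_⟩
  · have := congrArg Subtype.val x.2
    exact this
  · exact Subtype.ext τ.2.2
  · apply Subtype.ext; apply Subtype.ext; rfl
  · apply Subtype.ext; rfl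
end Decomp

/-! ### Lovász-style cancellation -/

section Lovasz
universe u u'

def eqS (V : Type*) : Setoid V := ⟨Eq, ⟨fun _ => rfl, Eq.symm, Eq.trans⟩⟩

lemma eqS_compat (T : InTree V) : Compat T (eqS V) :=
  ⟨fun a b h => by rw [show a = b from h], fun a b h => by rw [show a = b from h]⟩

def qTreeEqIso (T : InTree V) : SIso (qTree T (eqS V) (eqS_compat T)) T where
  e := { toFun := Quotient.lift id (fun _ _ h => h)
         invFun := Quotient.mk _
         left_inv := fun x => by induction x using Quotient.ind with | _ a => rfl
         right_inv := fun a => rfl }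
  hom := by
    constructor
    · intro x
      induction x using Quotient.ind with | _ a => rfl
    · intro x
      induction x using Quotient.ind with
      | _ a =>
        show T.height a = (qTree _ _ _).height (Quotient.mk _ a)
        rw [qTree_height]

lemma lovasz_icnt {VX : Type u} {WY : Type u'} [Finite VX] [Finite WY]
    (TX : InTree VX) (TY : InTree WY) (H : ℕ)
    (hc : ∀ (V' : Type u) (_ : Finite V') (T : InTree V'),
      (∀ v, T.height v ≤ H) → cnt T TX = cnt T TY) :
    ∀ (n : ℕ) (V' : Type u) (_ : Finite V') (T : InTree V'),
      Nat.card V' = n → (∀ v, T.height v ≤ H) → icnt T TX = icnt T TY := by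
  intro n
  induction n using Nat.strong_induction_on with
  | _ n ih =>
    intro V' hFin T hcard hH
    haveI := hFin
    classical
    have hdX := cnt_decomp T TX
    have hdY := cnt_decomp T TY
    set sbot : {s : Setoid V' // Compat T s} := ⟨eqS V', eqS_compat T⟩ with hsbot
    have hbotX : icnt (qTree T sbot.1 sbot.2) TX = icnt T TX :=
      icnt_congr_left (qTreeEqIso T) TX
    have hbotY : icnt (qTree T sbot.1 sbot.2) TY = icnt T TY :=
      icnt_congr_left (qTreeEqIso T) TY
    rw [← Finset.sum_erase_add _ _ (Finset.mem_univ sbot)] at hdX hdY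
    have htail : ∀ s ∈ Finset.univ.erase sbot,
        icnt (qTree T s.1 s.2) TX = icnt (qTree T s.1 s.2) TY := by
      intro s hsmem
      have hne : s ≠ sbot := (Finset.mem_erase.mp hsmem).1
      have hlt : Nat.card (Quotient s.1) < n := by
        have hsurj : Function.Surjective (Quotient.mk s.1) := Quotient.mk_surjective
        have hle := Nat.card_le_card_of_surjective _ hsurj
        rw [hcard] at hle
        rcases lt_or_eq_of_le hle with hl | he
        · exact hl
        · exfalso
          have hbij : Function.Bijective (Quotient.mk s.1) :=
            (Nat.bijective_iff_surjective_and_card _).mpr ⟨hsurj, by rw [hcard, he]⟩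
          have hinj := hbij.1
          apply hne
          apply Subtype.ext
          apply Setoid.ext
          intro a b
          constructor
          · intro hab
            exact hinj (Quotient.sound hab)
          · intro hab
            exact hab ▸ s.1.refl a
      refine ih _ hlt (Quotient s.1) inferInstance (qTree T s.1 s.2) rfl ?_
      intro x
      induction x using Quotient.ind with
      | _ a =>
        rw [qTree_height]
        exact hH a
    have hsum := Finset.sum_congr rfl htail
    have hcnt' := hc V' hFin T hH
    rw [hdX, hdY, hsum, hbotX, hbotY] at hcnt'
    omega

lemma exists_inj_hom {VX : Type u} {WY : Type u'} [Finite VX] [Finite WY]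
    (TX : InTree VX) (TY : InTree WY) (H : ℕ)
    (hc : ∀ (V' : Type u) (_ : Finite V') (T : InTree V'),
      (∀ v, T.height v ≤ H) → cnt T TX = cnt T TY)
    (hHX : ∀ v, TX.height v ≤ H) :
    ∃ τ : VX → WY, SHom TX TY τ ∧ Function.Injective τ := by
  have h1 := lovasz_icnt TX TY H hc (Nat.card VX) VX inferInstance TX rfl hHX
  have h2 : icnt TX TX ≠ 0 := by
    have hne : Nonempty {τ // SHom TX TX τ ∧ Function.Injective τ} :=
      ⟨⟨id, SHom.id TX, fun _ _ h => h⟩⟩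
    exact Nat.card_ne_zero.mpr ⟨hne, inferInstance⟩
  rw [h1] at h2
  have h3 := (Nat.card_ne_zero.mp h2).1
  obtain ⟨⟨τ, hτ⟩⟩ := h3
  exact ⟨τ, hτ⟩

lemma nonempty_siso {VX : Type u} {WY : Type u'} [Finite VX] [Finite WY]
    (TX : InTree VX) (TY : InTree WY) (H : ℕ)
    (hc1 : ∀ (V' : Type u) (_ : Finite V') (T : InTree V'),
      (∀ v, T.height v ≤ H) → cnt T TX = cnt T TY)
    (hc2 : ∀ (V' : Type u') (_ : Finite V') (T : InTree V'),
      (∀ v, T.height v ≤ H) → cnt T TY = cnt T TX)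
    (hHX : ∀ v, TX.height v ≤ H) (hHY : ∀ v, TY.height v ≤ H) :
    Nonempty (SIso TX TY) := by
  obtain ⟨τ, hτ, hinj⟩ := exists_inj_hom TX TY H hc1 hHX
  obtain ⟨υ, hυ, hinj'⟩ := exists_inj_hom TY TX H hc2 hHY
  have hcard : Nat.card VX = Nat.card WY :=
    le_antisymm (Nat.card_le_card_of_injective τ hinj) (Nat.card_le_card_of_injective υ hinj')
  have hbij : Function.Bijective τ := (Nat.bijective_iff_injective_and_card τ).mpr ⟨hinj, hcard⟩
  exact ⟨⟨Equiv.ofBijective τ hbij, hτ⟩⟩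

end Lovasz

/-! ### Functional graph basics -/

section FGBasics
variable {α : Type*} (f : α → α)

def Cyc (x : α) : Prop := ∃ n, 1 ≤ n ∧ f^[n] x = x

lemma Cyc.iterate {f : α → α} {x : α} (hx : Cyc f x) (k : ℕ) : Cyc f (f^[k] x) := by
  obtain ⟨n, hn, h⟩ := hx
  exact ⟨n, hn, by rw [← Function.iterate_add_apply, Nat.add_comm, Function.iterate_add_apply, h]⟩

lemma cyc_mul_iterate {f : α → α} {x : α} {n : ℕ} (h : f^[n] x = x) (s : ℕ) :
    f^[n*s] x = x := by
  induction s with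
  | zero => simp
  | succ s ih => rw [Nat.mul_succ, Function.iterate_add_apply, h, ih]

lemma exists_cyc_iterate [Finite α] (x : α) : ∃ k, k ≤ Nat.card α ∧ Cyc f (f^[k] x) := by
  haveI := Fintype.ofFinite α
  have hlt : Fintype.card α < Fintype.card (Fin (Nat.card α + 1)) := by
    simp [Nat.card_eq_fintype_card]
  obtain ⟨i, j, hne, he⟩ := Fintype.exists_ne_map_eq_of_card_lt
    (fun k : Fin (Nat.card α + 1) => f^[(k : ℕ)] x) hlt
  rcases Nat.lt_or_ge (i : ℕ) (j : ℕ) with hij | hij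
  · refine ⟨i, by omega, (j : ℕ) - i, by omega, ?_⟩
    rw [← Function.iterate_add_apply]
    rw [show (j : ℕ) - i + i = (j : ℕ) by omega]
    exact he.symm
  · have hij' : (j : ℕ) < i := by
      rcases Nat.lt_or_ge (j : ℕ) (i : ℕ) with hx | hx
      · exact hx
      · exfalso; exact hne (Fin.ext (by omega))
    refine ⟨j, by omega, (i : ℕ) - j, by omega, ?_⟩
    rw [← Function.iterate_add_apply]
    rw [show (i : ℕ) - j + j = (i : ℕ) by omega]
    exact he

lemma reach_of_connected [Finite α] (hf : FGConnected f) {c : α} (hc : Cyc f c) (w : α) :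
    ∃ d, f^[d] w = c := by
  have key : ∀ x y, Relation.EqvGen (fun u w => f u = w) x y → ∃ m n, f^[m] x = f^[n] y := by
    intro x y hxy
    induction hxy with
    | rel a b hab => exact ⟨1, 0, by simpa using hab⟩
    | refl a => exact ⟨0, 0, rfl⟩
    | symm a b _ ih => obtain ⟨m, n, hmn⟩ := ih; exact ⟨n, m, hmn.symm⟩
    | trans a b d _ _ ih1 ih2 =>
      obtain ⟨m, n, h1⟩ := ih1
      obtain ⟨m', n', h2⟩ := ih2
      refine ⟨m' + m, n + n', ?_⟩
      rw [Function.iterate_add_apply, h1, ← Function.iterate_add_apply, Nat.add_comm m' n,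
        Function.iterate_add_apply, h2, ← Function.iterate_add_apply]
  obtain ⟨m, n, hmn⟩ := key w c (hf w c)
  obtain ⟨P, hP1, hPc⟩ := hc
  have hper : f^[P*(n+1)] c = c := cyc_mul_iterate hPc (n+1)
  refine ⟨(P*(n+1) - n) + m, ?_⟩
  rw [Function.iterate_add_apply, hmn, ← Function.iterate_add_apply]
  rw [show P*(n+1) - n + n = P*(n+1) by
    have := Nat.mul_le_mul_right (n+1) hP1; omega]
  exact hper

lemma cyc_isPeriodic {x : α} (hx : Cyc f x) :
    0 < Function.minimalPeriod f x := by
  obtain ⟨n, hn, h⟩ := hx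
  exact (Function.IsPeriodicPt.minimalPeriod_pos (by omega) h)

lemma iterate_minPeriod_dvd {x : α} {e : ℕ} (h : f^[e] x = x) :
    Function.minimalPeriod f x ∣ e :=
  Function.isPeriodicPt_iff_minimalPeriod_dvd.mp h

lemma cyc_eq_orbit [Finite α] (hf : FGConnected f) {c : α} (hc : Cyc f c) {x : α}
    (hx : Cyc f x) : ∃ r, x = f^[r] c := by
  obtain ⟨d, hd⟩ := reach_of_connected f hf hx c
  exact ⟨d, hd.symm⟩

lemma periodicCount_eq_minimalPeriod [Finite α] (hf : FGConnected f) {c : α} (hc : Cyc f c) :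
    periodicCount f = Function.minimalPeriod f c := by
  set p := Function.minimalPeriod f c with hp
  have hppos : 0 < p := cyc_isPeriodic f hc
  have hcp : f^[p] c = c := Function.iterate_minimalPeriod
  have hbij : Function.Bijective (fun r : Fin p => (⟨f^[(r : ℕ)] c, hc.iterate _⟩ :
      {x : α // Cyc f x})) := by
    constructor
    · intro r s hrs
      have := congrArg Subtype.val hrs
      have h2 := Function.iterate_injOn_Iio_minimalPeriod (f := f) (x := c)
        (by exact r.2) (by exact s.2) this
      exact Fin.ext h2
    · rintro ⟨x, hx⟩
      obtain ⟨r, hr⟩ := cyc_eq_orbit f hf hc hx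
      refine ⟨⟨r % p, Nat.mod_lt _ hppos⟩, ?_⟩
      apply Subtype.ext
      show f^[r % p] c = x
      rw [hr]
      conv_rhs => rw [← Nat.mod_add_div r p]
      rw [Function.iterate_add_apply, cyc_mul_iterate hcp _]
  have : Nat.card {x : α // Cyc f x} = p := by
    rw [← Nat.card_congr (Equiv.ofBijective _ hbij)]
    simp
  rw [← this]
  rfl

end FGBasics

/-! ### The embedding isomorphism -/

section Embed
variable {β α γ : Type*} (f : α → α) (h : γ → γ) (g : β → β) (e : β → α × γ) (b : β)

lemma prod_iter (k : ℕ) (z : α × γ) : (prodMap f h)^[k] z = (f^[k] z.1, h^[k] z.2) := by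
  induction k generalizing z with
  | zero => rfl
  | succ k ih => rw [Function.iterate_succ_apply, Function.iterate_succ_apply,
      Function.iterate_succ_apply, ih]; rfl

lemma e_iter (hcomm : e ∘ g = prodMap f h ∘ e) (k : ℕ) (y : β) :
    e (g^[k] y) = (prodMap f h)^[k] (e y) := by
  induction k generalizing y with
  | zero => rfl
  | succ k ih =>
    rw [Function.iterate_succ_apply, Function.iterate_succ_apply, ih (g y),
      show e (g y) = prodMap f h (e y) from congrFun hcomm y]

lemma closed_iter (hclosed : ∀ z, prodMap f h z ∈ Set.range e → z ∈ Set.range e)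
    (k : ℕ) (z : α × γ) :
    (prodMap f h)^[k] z ∈ Set.range e → z ∈ Set.range e := by
  induction k generalizing z with
  | zero => exact fun hz => hz
  | succ k ih =>
    intro hz
    rw [Function.iterate_succ_apply] at hz
    exact hclosed z (ih _ hz)

lemma emb_fst (hcomm : e ∘ g = prodMap f h ∘ e) (k : ℕ) (y : β) (hy : g^[k] y = b) :
    f^[k] (e y).1 = (e b).1 := by
  have := e_iter f h g e hcomm k y
  rw [hy, prod_iter] at this
  exact (congrArg Prod.fst this).symm

lemma emb_snd (hcomm : e ∘ g = prodMap f h ∘ e) (k : ℕ) (y : β) (hy : g^[k] y = b) :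
    h^[k] (e y).2 = (e b).2 := by
  have := e_iter f h g e hcomm k y
  rw [hy, prod_iter] at this
  exact (congrArg Prod.snd this).symm

lemma emb_surj_aux (hinj : Function.Injective e)
    (hcomm : e ∘ g = prodMap f h ∘ e)
    (hclosed : ∀ z, prodMap f h z ∈ Set.range e → z ∈ Set.range e)
    (z : StarVertex (unroll f (e b).1) (unroll h (e b).2)) :
    ∃ y : β, e y = (z.1.1.1.1, z.1.2.1.1) ∧ g^[z.1.1.1.2] y = b := by
  have hk : z.1.2.1.2 = z.1.1.1.2 := by
    have := z.2
    rw [unroll_height, unroll_height] at this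
    exact this.symm
  have hmem : (prodMap f h)^[z.1.1.1.2] ((z.1.1.1.1, z.1.2.1.1)) ∈ Set.range e := by
    rw [prod_iter]
    have h1 : f^[z.1.1.1.2] z.1.1.1.1 = (e b).1 := z.1.1.2
    have h2 : h^[z.1.1.1.2] z.1.2.1.1 = (e b).2 := by
      rw [← hk]; exact z.1.2.2
    rw [h1, h2]
    exact ⟨b, rfl⟩
  obtain ⟨y, hy⟩ := closed_iter f h e hclosed _ _ hmem
  refine ⟨y, hy, ?_⟩
  apply hinj
  rw [e_iter f h g e hcomm, hy, prod_iter]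
  apply Prod.ext
  · exact z.1.1.2
  · show h^[z.1.1.1.2] z.1.2.1.1 = (e b).2
    rw [← hk]; exact z.1.2.2

def embMap (hcomm : e ∘ g = prodMap f h ∘ e) (x : UnrollVertex g b) :
    StarVertex (unroll f (e b).1) (unroll h (e b).2) :=
  ⟨(⟨((e x.1.1).1, x.1.2), emb_fst f h g e b hcomm x.1.2 x.1.1 x.2⟩,
    ⟨((e x.1.1).2, x.1.2), emb_snd f h g e b hcomm x.1.2 x.1.1 x.2⟩), by
    rw [unroll_height, unroll_height]⟩

lemma embMap_bij (hinj : Function.Injective e)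
    (hcomm : e ∘ g = prodMap f h ∘ e)
    (hclosed : ∀ z, prodMap f h z ∈ Set.range e → z ∈ Set.range e) :
    Function.Bijective (embMap f h g e b hcomm) := by
  constructor
  · intro x₁ x₂ heq
    have h1 : (((e x₁.1.1).1, x₁.1.2) : α × ℕ) = ((e x₂.1.1).1, x₂.1.2) :=
      congrArg (fun z => z.1.1.1) heq
    have h2 : (((e x₁.1.1).2, x₁.1.2) : γ × ℕ) = ((e x₂.1.1).2, x₂.1.2) :=
      congrArg (fun z => z.1.2.1) heq
    have hk := congrArg Prod.snd h1
    have he1 := congrArg Prod.fst h1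
    have he2 := congrArg Prod.fst h2
    have hee : e x₁.1.1 = e x₂.1.1 := Prod.ext he1 he2
    exact Subtype.ext (Prod.ext (hinj hee) hk)
  · intro z
    obtain ⟨y, hy1, hy2⟩ := emb_surj_aux f h g e b hinj hcomm hclosed z
    have hk : z.1.2.1.2 = z.1.1.1.2 := by
      have := z.2
      rw [unroll_height, unroll_height] at this
      exact this.symm
    have he1 : (e y).1 = z.1.1.1.1 := by rw [hy1]
    have he2 : (e y).2 = z.1.2.1.1 := by rw [hy1]
    refine ⟨⟨(y, z.1.1.1.2), hy2⟩, ?_⟩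
    apply Subtype.ext
    show ((⟨((e y).1, z.1.1.1.2), _⟩ : UnrollVertex f (e b).1),
          (⟨((e y).2, z.1.1.1.2), _⟩ : UnrollVertex h (e b).2)) = z.1
    refine Prod.ext (Subtype.ext ?_) (Subtype.ext ?_)
    · show ((e y).1, z.1.1.1.2) = z.1.1.1
      rw [he1]
    · show ((e y).2, z.1.1.1.2) = z.1.2.1
      rw [he2, ← hk]

noncomputable def embIso (hinj : Function.Injective e)
    (hcomm : e ∘ g = prodMap f h ∘ e)
    (hclosed : ∀ z, prodMap f h z ∈ Set.range e → z ∈ Set.range e) :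
    SIso (unroll g b) (star (unroll f (e b).1) (unroll h (e b).2)) where
  e := Equiv.ofBijective _ (embMap_bij f h g e b hinj hcomm hclosed)
  hom := by
    constructor
    · rintro ⟨⟨y, k⟩, hy⟩
      show embMap f h g e b hcomm _ = (star _ _).parent (embMap f h g e b hcomm _)
      match k, hy with
      | 0, hy => rfl
      | (k+1), hy =>
        have hcy : e (g y) = (f (e y).1, h (e y).2) := congrFun hcomm y
        have h1 : (e (g y)).1 = f (e y).1 := by rw [hcy]
        have h2 : (e (g y)).2 = h (e y).2 := by rw [hcy]
        apply Subtype.ext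
        refine Prod.ext (Subtype.ext ?_) (Subtype.ext ?_)
        · show ((e (g y)).1, k) = (f (e y).1, k)
          rw [h1]
        · show ((e (g y)).2, k) = (h (e y).2, k)
          rw [h2]
    · intro x
      show (star _ _).height (embMap f h g e b hcomm x) = _
      rw [star_height, unroll_height, unroll_height]
      rfl

end Embed

/-! ### Reconstruction: basic invariants of a pointed connected FG -/

section ReconBase
variable {γ : Type*} (h : γ → γ) (c : γ)

noncomputable def ell (w : γ) : ℕ := sInf {k | Cyc h (h^[k] w)}
noncomputable def dW (w : γ) : ℕ := sInf {d | h^[d] w = c}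
noncomputable def entryPt (w : γ) : γ := h^[ell h w] w
noncomputable def zp (p : ℕ) (k : ℕ) : γ := h^[(p - k % p) % p] c
noncomputable def jj (p : ℕ) (w : γ) : ℕ := dW h c (entryPt h w) % p

variable [Finite γ]

lemma ell_nonempty (w : γ) : ∃ k, k ∈ {k | Cyc h (h^[k] w)} := by
  obtain ⟨k, _, hk⟩ := exists_cyc_iterate h w
  exact ⟨k, hk⟩

lemma ell_spec (w : γ) : Cyc h (h^[ell h w] w) := Nat.sInf_mem (ell_nonempty h w)

lemma ell_le_card (w : γ) : ell h w ≤ Nat.card γ := by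
  obtain ⟨k, hk, hck⟩ := exists_cyc_iterate h w
  exact le_trans (Nat.sInf_le hck) hk

lemma cyc_iff_ell_le (w : γ) (s : ℕ) : Cyc h (h^[s] w) ↔ ell h w ≤ s := by
  constructor
  · exact fun hs => Nat.sInf_le hs
  · intro hs
    have := (ell_spec h w).iterate (s - ell h w)
    rw [← Function.iterate_add_apply] at this
    rwa [show s - ell h w + ell h w = s by omega] at this

lemma ell_eq_zero_iff (w : γ) : ell h w = 0 ↔ Cyc h w := by
  have := cyc_iff_ell_le h w 0
  simp only [Function.iterate_zero_apply] at this
  constructor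
  · intro h0; exact this.mpr (by omega)
  · intro hcy; have := this.mp hcy; omega

lemma ell_pos (w : γ) (hw : ¬ Cyc h w) : 1 ≤ ell h w := by
  rcases Nat.eq_zero_or_pos (ell h w) with h0 | h1
  · exact absurd ((ell_eq_zero_iff h w).mp h0) hw
  · exact h1

lemma ell_step (w : γ) (hw : ¬ Cyc h w) : ell h (h w) = ell h w - 1 := by
  have hpos : 1 ≤ ell h w := by
    rcases Nat.eq_zero_or_pos (ell h w) with h0 | h1
    · exact absurd ((ell_eq_zero_iff h w).mp h0) hw
    · exact h1
  apply le_antisymm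
  · apply Nat.sInf_le
    show Cyc h (h^[ell h w - 1] (h w))
    have : h^[ell h w - 1] (h w) = h^[ell h w] w := by
      rw [← Function.iterate_succ_apply]
      congr 1
      omega
    rw [this]
    exact ell_spec h w
  · have hsp := ell_spec h (h w)
    rw [← Function.iterate_succ_apply] at hsp
    have := (cyc_iff_ell_le h w (ell h (h w) + 1)).mp hsp
    omega

lemma entry_cyc (w : γ) : Cyc h (entryPt h w) := ell_spec h w

lemma entry_step (w : γ) (hw : ¬ Cyc h w) : entryPt h (h w) = entryPt h w := by
  unfold entryPt
  rw [ell_step h w hw, ← Function.iterate_succ_apply]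
  congr 1
  have := ell_pos h w hw
  omega

end ReconBase

/-! ### Side data for reconstruction -/

structure Side (γ : Type*) (p Dm t : ℕ) where
  h : γ → γ
  c : γ
  hp : 1 ≤ p
  hcyc : Cyc h c
  hmp : Function.minimalPeriod h c = p
  hreach : ∀ w, ∃ d, h^[d] w = c
  hDm : Nat.card γ ≤ Dm
  ht : p + 2*Dm + 2 ≤ t

namespace Side
variable {γ : Type*} {p Dm t : ℕ} (S : Side γ p Dm t)

lemma hcp : S.h^[p] S.c = S.c := by
  have := Function.iterate_minimalPeriod (f := S.h) (x := S.c)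
  rwa [S.hmp] at this

lemma dW_spec (w : γ) : S.h^[dW S.h S.c w] w = S.c := Nat.sInf_mem (S.hreach w)

lemma c_mod {a b : ℕ} (hab : a % p = b % p) : S.h^[a] S.c = S.h^[b] S.c := by
  have key : ∀ a b : ℕ, a ≤ b → a % p = b % p → S.h^[a] S.c = S.h^[b] S.c := by
    intro a b hle hab
    have hdvd : p ∣ b - a := (Nat.modEq_iff_dvd' hle).mp hab
    obtain ⟨s, hs⟩ := hdvd
    have hb : b = a + p * s := by omega
    rw [hb, Function.iterate_add_apply, cyc_mul_iterate S.hcp]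
  rcases le_total a b with hle | hle
  · exact key a b hle hab
  · exact (key b a hle hab.symm).symm

lemma valid_mod {w : γ} {d d' : ℕ} (hd : S.h^[d] w = S.c) (hd' : S.h^[d'] w = S.c) :
    d % p = d' % p := by
  have key : ∀ d d' : ℕ, d ≤ d' → S.h^[d] w = S.c → S.h^[d'] w = S.c → d % p = d' % p := by
    intro d d' hle hd hd'
    have h1 : S.h^[d' - d] S.c = S.c := by
      rw [← hd, ← Function.iterate_add_apply]
      rw [show d' - d + d = d' by omega]
      rw [hd']
      exact hd.symm
    have hdvd : p ∣ d' - d := by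
      rw [← S.hmp]
      exact iterate_minPeriod_dvd S.h h1
    obtain ⟨s, hs⟩ := hdvd
    have : d' = d + p * s := by omega
    rw [this, Nat.add_mul_mod_self_left]
  rcases le_total d d' with hle | hle
  · exact key d d' hle hd hd'
  · exact (key d' d hle hd' hd).symm

lemma orbit_of_cyc {y : γ} (hy : Cyc S.h y) : ∃ r, S.h^[r] S.c = y := by
  obtain ⟨d, hd⟩ := S.hreach y
  obtain ⟨Q, hQ1, hQy⟩ := hy
  refine ⟨Q*(d+1) - d, ?_⟩
  rw [← hd, ← Function.iterate_add_apply]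
  rw [show Q*(d+1) - d + d = Q*(d+1) by
    have := Nat.mul_le_mul_right (d+1) hQ1; omega]
  exact cyc_mul_iterate hQy (d+1)

lemma cyc_valid_shift {y : γ} (hy : Cyc S.h y) {d d' : ℕ} (hd : S.h^[d] y = S.c)
    (hmod : d' % p = d % p) : S.h^[d'] y = S.c := by
  obtain ⟨r, hr⟩ := S.orbit_of_cyc hy
  have h1 : S.h^[d + r] S.c = S.c := by
    rw [Function.iterate_add_apply, hr]; exact hd
  have h2 : S.h^[d' + r] S.c = S.h^[d + r] S.c :=
    S.c_mod (by
      have := Nat.ModEq.add_right r (show d' ≡ d [MOD p] from hmod)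
      exact this)
  rw [← hr, ← Function.iterate_add_apply, h2, h1]

lemma zp_spec (k : ℕ) : S.h^[k] (zp S.h S.c p k) = S.c := by
  unfold zp
  rw [← Function.iterate_add_apply]
  have hp0 : 0 < p := by have := S.hp; omega
  have h1 : (k + (p - k % p) % p) % p = 0 % p := by
    have hlt : k % p < p := Nat.mod_lt _ hp0
    rcases Nat.eq_zero_or_pos (k % p) with h0 | hpos
    · rw [h0, Nat.sub_zero, Nat.mod_self, Nat.add_zero, Nat.zero_mod]
      exact h0
    · have he : (p - k % p) % p = p - k % p := Nat.mod_eq_of_lt (by omega)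
      rw [he, Nat.zero_mod]
      have hA := Nat.div_add_mod k p
      have h2 : k + (p - k % p) = p * (k / p) + p := by omega
      rw [h2, show p * (k / p) + p = p * (k / p + 1) by ring, Nat.mul_mod_right]
  have := S.c_mod h1
  simpa using this

lemma zp_cyc (k : ℕ) : Cyc S.h (zp S.h S.c p k) := S.hcyc.iterate _

lemma zp_mod {a b : ℕ} (hab : a % p = b % p) : zp S.h S.c p a = zp S.h S.c p b := by
  unfold zp
  rw [hab]

lemma zp_unique {y : γ} (k : ℕ) (hy : Cyc S.h y) (hk : S.h^[k] y = S.c) :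
    y = zp S.h S.c p k := by
  obtain ⟨r, hr⟩ := S.orbit_of_cyc hy
  have h1 : S.h^[k + r] S.c = S.c := by
    rw [Function.iterate_add_apply, hr]; exact hk
  have h2 : S.h^[k + (p - k % p) % p] S.c = S.c := by
    rw [Function.iterate_add_apply]
    exact S.zp_spec k
  have h3 : (k + r) % p = (k + (p - k % p) % p) % p :=
    S.valid_mod (w := S.c) h1 h2
  have h4 : r % p = (p - k % p) % p % p := by
    have := Nat.ModEq.add_left_cancel' k (show k + r ≡ k + (p - k % p) % p [MOD p] from h3)
    exact this
  rw [← hr]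
  show S.h^[r] S.c = S.h^[(p - k % p) % p] S.c
  exact S.c_mod (by rw [h4, Nat.mod_mod_of_dvd _ (dvd_refl p)])

lemma zp_step (k : ℕ) : S.h (zp S.h S.c p (k+1)) = zp S.h S.c p k := by
  have hcy : Cyc S.h (S.h (zp S.h S.c p (k+1))) := by
    have := (S.zp_cyc (k+1)).iterate 1
    simpa using this
  have hval : S.h^[k] (S.h (zp S.h S.c p (k+1))) = S.c := by
    rw [← Function.iterate_succ_apply]
    exact S.zp_spec (k+1)
  exact S.zp_unique k hcy hval

lemma cyc_entry_eq {w : γ} [Finite γ] (hw : Cyc S.h w) : entryPt S.h w = w := by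
  unfold entryPt
  rw [(ell_eq_zero_iff S.h w).mpr hw]
  rfl

lemma vertex_valid [Finite γ] (w : γ) : S.h^[jj S.h S.c p w + ell S.h w] w = S.c := by
  rw [Function.iterate_add_apply]
  show S.h^[jj S.h S.c p w] (entryPt S.h w) = S.c
  refine S.cyc_valid_shift (entry_cyc S.h w) (S.dW_spec (entryPt S.h w)) ?_
  unfold jj
  rw [Nat.mod_mod_of_dvd _ (dvd_refl p)]

lemma jj_lt [Finite γ] (w : γ) : jj S.h S.c p w < p := Nat.mod_lt _ (by have := S.hp; omega)

lemma cyc_pre {w : γ} (s : ℕ) (hw : Cyc S.h w) : ∃ u, Cyc S.h u ∧ S.h^[s] u = w := by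
  obtain ⟨Q, hQ1, hQw⟩ := hw
  refine ⟨S.h^[Q*(s+1) - s] w, ⟨Q, hQ1, ?_⟩, ?_⟩
  · rw [← Function.iterate_add_apply, Nat.add_comm, Function.iterate_add_apply, hQw]
  · rw [← Function.iterate_add_apply]
    rw [show s + (Q*(s+1) - s) = Q*(s+1) by
      have := Nat.mul_le_mul_right (s+1) hQ1; omega]
    exact cyc_mul_iterate hQw (s+1)

lemma cyc_of_pre [Finite γ] {u w : γ} (hu : S.h^[Dm+1] u = w) : Cyc S.h w := by
  rw [← hu]
  rw [cyc_iff_ell_le]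
  have := ell_le_card S.h u
  have := S.hDm
  omega

end Side

/-! ### Vertex layer over cut unrolls -/

section VertexLayer
variable {γ : Type*} (h : γ → γ) (c : γ) (t : ℕ)

def mkV (w : γ) (k : ℕ) (pf : h^[k] w = c) (hk : k ≤ t) : CutVertex (unroll h c) t :=
  ⟨⟨(w, k), pf⟩, by erw [unroll_height]; exact hk⟩

abbrev lab {h : γ → γ} {c : γ} {t : ℕ} (x : CutVertex (unroll h c) t) : γ := x.1.1.1
abbrev idx {h : γ → γ} {c : γ} {t : ℕ} (x : CutVertex (unroll h c) t) : ℕ := x.1.1.2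

lemma lab_valid (x : CutVertex (unroll h c) t) : h^[idx x] (lab x) = c := x.1.2
lemma idx_le (x : CutVertex (unroll h c) t) : idx x ≤ t := by
  have := x.2
  rwa [unroll_height] at this

lemma V_ext {x y : CutVertex (unroll h c) t} (h1 : lab x = lab y) (h2 : idx x = idx y) :
    x = y := Subtype.ext (Subtype.ext (Prod.ext h1 h2))

@[simp] lemma lab_mkV (w k pf hk) : lab (mkV h c t w k pf hk) = w := rfl
@[simp] lemma idx_mkV (w k pf hk) : idx (mkV h c t w k pf hk) = k := rfl

lemma parent_iter_lab (s : ℕ) (x : CutVertex (unroll h c) t) (hs : s ≤ idx x) :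
    lab ((cut (unroll h c) t).parent^[s] x) = h^[s] (lab x)
      ∧ idx ((cut (unroll h c) t).parent^[s] x) = idx x - s := by
  have h1 : ((cut (unroll h c) t).parent^[s] x).1 = (unroll h c).parent^[s] x.1 :=
    cutParent_iterate _ _ s x
  have h2 := unroll_iterate' h c s x.1 hs
  constructor
  · show (((cut (unroll h c) t).parent^[s] x).1).1.1 = _
    rw [h1]
    exact congrArg Prod.fst h2
  · show (((cut (unroll h c) t).parent^[s] x).1).1.2 = _
    rw [h1]
    exact congrArg Prod.snd h2

lemma parent_lab (x : CutVertex (unroll h c) t) (hx : 1 ≤ idx x) :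
    lab ((cut (unroll h c) t).parent x) = h (lab x)
      ∧ idx ((cut (unroll h c) t).parent x) = idx x - 1 := by
  have := parent_iter_lab h c t 1 x hx
  simpa using this

end VertexLayer

/-! ### Transport of the cycle predicate along an iso -/

section Transport
variable {γ γ' : Type*} [Finite γ] [Finite γ'] {p Dm t : ℕ}
  (S : Side γ p Dm t) (S' : Side γ' p Dm t)
  (Ψ : SIso (cut (unroll S.h S.c) t) (cut (unroll S'.h S'.c) t))

lemma iso_idx (x : CutVertex (unroll S.h S.c) t) : idx (Ψ.e x) = idx x := by
  have := Ψ.hom.2 x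
  rw [cut_height, cut_height, unroll_height, unroll_height] at this
  exact this

lemma cyc_transport_fwd (x : CutVertex (unroll S.h S.c) t)
    (hx : idx x + Dm + 1 ≤ t) (hcyc : Cyc S.h (lab x)) : Cyc S'.h (lab (Ψ.e x)) := by
  obtain ⟨u, hucyc, hu⟩ := S.cyc_pre (Dm+1) hcyc
  have hval : S.h^[idx x + (Dm+1)] u = S.c := by
    rw [Function.iterate_add_apply, hu]
    exact lab_valid _ _ _ x
  set x' := mkV S.h S.c t u (idx x + (Dm+1)) hval (by omega) with hx'
  have hidx0 : idx x' = idx x + (Dm+1) := by rw [hx']; rfl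
  have hlab0 : lab x' = u := by rw [hx']; rfl
  have hpar : (cut (unroll S.h S.c) t).parent^[Dm+1] x' = x := by
    have hp := parent_iter_lab S.h S.c t (Dm+1) x' (by omega)
    apply V_ext
    · rw [hp.1, hlab0, hu]
    · rw [hp.2, hidx0]; omega
  have hpar' : (cut (unroll S'.h S'.c) t).parent^[Dm+1] (Ψ.e x') = Ψ.e x := by
    rw [← Ψ.hom.iterate (Dm+1) x', hpar]
  have hidx' : idx (Ψ.e x') = idx x + (Dm+1) := by
    rw [iso_idx S S' Ψ x', hidx0]
  have hlab' : S'.h^[Dm+1] (lab (Ψ.e x')) = lab (Ψ.e x) := by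
    have hq := (parent_iter_lab S'.h S'.c t (Dm+1) (Ψ.e x') (by omega)).1
    rw [hpar'] at hq
    exact hq.symm
  exact S'.cyc_of_pre hlab'

lemma cyc_transport (x : CutVertex (unroll S.h S.c) t)
    (hx : idx x + Dm + 1 ≤ t) : Cyc S.h (lab x) ↔ Cyc S'.h (lab (Ψ.e x)) := by
  constructor
  · exact cyc_transport_fwd S S' Ψ x hx
  · intro hc'
    have hx' : idx (Ψ.e x) + Dm + 1 ≤ t := by rw [iso_idx S S' Ψ x]; exact hx
    have := cyc_transport_fwd S' S Ψ.symm (Ψ.e x) hx' hc'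
    rwa [show Ψ.symm.e (Ψ.e x) = x from Ψ.e.symm_apply_apply x] at this

lemma spine_pres (k : ℕ) (hk : k + Dm + 1 ≤ t) (pf : S.h^[k] (zp S.h S.c p k) = S.c)
    (pf' : S'.h^[k] (zp S'.h S'.c p k) = S'.c) :
    Ψ.e (mkV S.h S.c t (zp S.h S.c p k) k pf (by omega)) =
      mkV S'.h S'.c t (zp S'.h S'.c p k) k pf' (by omega) := by
  set x := mkV S.h S.c t (zp S.h S.c p k) k pf (by omega) with hx
  have hidxx : idx x = k := by rw [hx]; rfl
  have hlabx : lab x = zp S.h S.c p k := by rw [hx]; rfl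
  have hcy' : Cyc S'.h (lab (Ψ.e x)) := by
    refine cyc_transport_fwd S S' Ψ x (by omega) ?_
    rw [hlabx]
    exact S.zp_cyc k
  have hidx : idx (Ψ.e x) = k := by rw [iso_idx S S' Ψ x, hidxx]
  have hval : S'.h^[k] (lab (Ψ.e x)) = S'.c := by
    have := lab_valid S'.h S'.c t (Ψ.e x)
    rwa [hidx] at this
  have hlab : lab (Ψ.e x) = zp S'.h S'.c p k := S'.zp_unique k hcy' hval
  exact V_ext S'.h S'.c t hlab hidx

end Transport

/-! ### The reconstruction map -/

section RecMap
variable {γ γ' : Type*} [Finite γ] [Finite γ'] {p Dm t : ℕ}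
  (S : Side γ p Dm t) (S' : Side γ' p Dm t)

lemma K_le (w : γ) : jj S.h S.c p w + ell S.h w ≤ p - 1 + Dm := by
  have h1 := S.jj_lt w
  have h2 := ell_le_card S.h w
  have h3 := S.hDm
  omega

lemma K_le_t (w : γ) : jj S.h S.c p w + ell S.h w ≤ t := by
  have := K_le S w
  have := S.ht
  omega

noncomputable def recMap (Φ : CutVertex (unroll S.h S.c) t → CutVertex (unroll S'.h S'.c) t)
    (w : γ) : γ' :=
  @dite _ (Cyc S.h w) (Classical.propDecidable _)
    (fun _ => zp S'.h S'.c p (dW S.h S.c w))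
    (fun _ => lab (Φ (mkV S.h S.c t w (jj S.h S.c p w + ell S.h w) (S.vertex_valid w)
      (K_le_t S w))))

lemma recMap_cyc (Φ) {w : γ} (hw : Cyc S.h w) :
    recMap S S' Φ w = zp S'.h S'.c p (dW S.h S.c w) := by
  unfold recMap
  rw [dif_pos hw]

lemma recMap_ncyc (Φ) {w : γ} (hw : ¬ Cyc S.h w) :
    recMap S S' Φ w = lab (Φ (mkV S.h S.c t w (jj S.h S.c p w + ell S.h w)
      (S.vertex_valid w) (K_le_t S w))) := by
  unfold recMap
  rw [dif_neg hw]

variable (Ψ : SIso (cut (unroll S.h S.c) t) (cut (unroll S'.h S'.c) t))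

lemma recMap_equiv : ∀ w, recMap S S' Ψ.e (S.h w) = S'.h (recMap S S' Ψ.e w) := by
  intro w
  by_cases hw : Cyc S.h w
  · -- cycle case
    have hw2 : Cyc S.h (S.h w) := by
      have := hw.iterate 1
      simpa using this
    rw [recMap_cyc S S' Ψ.e hw2, recMap_cyc S S' Ψ.e hw]
    set d := dW S.h S.c w with hdd
    have hd : S.h^[d] w = S.c := S.dW_spec w
    have hd2 : S.h^[d + p - 1] (S.h w) = S.c := by
      have hstep : S.h^[(d + p - 1) + 1] w = S.h^[d + p - 1] (S.h w) :=
        Function.iterate_succ_apply S.h (d+p-1) w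
      rw [← hstep, show d + p - 1 + 1 = p + d by have := S.hp; omega,
        Function.iterate_add_apply, hd]
      exact S.hcp
    have hmodd : dW S.h S.c (S.h w) % p = (d + p - 1) % p :=
      S.valid_mod (S.dW_spec (S.h w)) hd2
    rw [S'.zp_mod hmodd]
    have h1 : S'.h (zp S'.h S'.c p (d + p)) = zp S'.h S'.c p (d + p - 1) := by
      have h2 := S'.zp_step (d + p - 1)
      rwa [show d + p - 1 + 1 = d + p by have := S.hp; omega] at h2
    rw [← h1]
    exact congrArg S'.h (S'.zp_mod (Nat.add_mod_right d p))
  · -- non-cycle case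
    set K := jj S.h S.c p w + ell S.h w with hK
    set xw := mkV S.h S.c t w K (S.vertex_valid w) (K_le_t S w) with hxw
    have hidxxw : idx xw = K := by rw [hxw]; rfl
    have hlabxw : lab xw = w := by rw [hxw]; rfl
    have hellpos : 1 ≤ ell S.h w := ell_pos S.h w hw
    have hidxY : idx (Ψ.e xw) = K := by rw [iso_idx S S' Ψ xw, hidxxw]
    by_cases hw2 : Cyc S.h (S.h w)
    · -- the parent is on the spine
      have hell1 : ell S.h w = 1 := by
        have hle := (cyc_iff_ell_le S.h w 1).mp (by simpa using hw2)
        omega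
      have hentry : entryPt S.h w = S.h w := by
        unfold entryPt
        rw [hell1]
        simp
      rw [recMap_cyc S S' Ψ.e hw2, recMap_ncyc S S' Ψ.e hw]
      -- h w equals the spine point
      have hvalhw : S.h^[jj S.h S.c p w] (S.h w) = S.c := by
        have := S.vertex_valid w
        rw [hell1] at this
        rw [← Function.iterate_succ_apply]
        exact this
      have hspinept : S.h w = zp S.h S.c p (jj S.h S.c p w) :=
        S.zp_unique _ hw2 hvalhw
      -- parent of xw
      have hKval : K = jj S.h S.c p w + 1 := by rw [hK, hell1]
      have hpar : (cut (unroll S.h S.c) t).parent xw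
          = mkV S.h S.c t (zp S.h S.c p (jj S.h S.c p w)) (jj S.h S.c p w)
            (S.zp_spec _) (by have := S.jj_lt w; have := S.ht; omega) := by
        have hp := parent_lab S.h S.c t xw (by rw [hidxxw, hKval]; omega)
        apply V_ext
        · rw [hp.1, hlabxw]
          exact hspinept
        · rw [hp.2]
          show idx xw - 1 = jj S.h S.c p w
          omega
      have hspine := spine_pres S S' Ψ (jj S.h S.c p w)
        (by have := S.jj_lt w; have := S.ht; omega) (S.zp_spec _) (S'.zp_spec _)
      -- now compute RHS
      have hYpar := parent_lab S'.h S'.c t (Ψ.e xw) (by rw [hidxY, hKval]; omega)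
      have hchain : S'.h (lab (Ψ.e xw)) = zp S'.h S'.c p (jj S.h S.c p w) := by
        rw [← hYpar.1]
        rw [show (cut (unroll S'.h S'.c) t).parent (Ψ.e xw) = Ψ.e ((cut (unroll S.h S.c) t).parent xw)
          from (Ψ.hom.1 xw).symm]
        rw [hpar, hspine]
        rfl
      rw [hchain]
      -- LHS : zp' (dW (h w)) = zp' (jj w)
      have hjj : jj S.h S.c p w = dW S.h S.c (S.h w) % p := by
        unfold jj
        rw [hentry]
      refine S'.zp_mod ?_
      rw [hjj, Nat.mod_mod_of_dvd _ (dvd_refl p)]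
    · -- both off the cycle
      rw [recMap_ncyc S S' Ψ.e hw2, recMap_ncyc S S' Ψ.e hw]
      have hjj2 : jj S.h S.c p (S.h w) = jj S.h S.c p w := by
        unfold jj
        rw [entry_step S.h w hw]
      have hell2 : ell S.h (S.h w) = ell S.h w - 1 := ell_step S.h w hw
      have hpar : mkV S.h S.c t (S.h w) (jj S.h S.c p (S.h w) + ell S.h (S.h w))
          (S.vertex_valid (S.h w)) (K_le_t S (S.h w))
          = (cut (unroll S.h S.c) t).parent xw := by
        have hp := parent_lab S.h S.c t xw (by rw [hidxxw, hK]; omega)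
        apply V_ext
        · rw [hp.1, hlabxw]
          rfl
        · rw [hp.2, hidxxw]
          show jj S.h S.c p (S.h w) + ell S.h (S.h w) = K - 1
          rw [hjj2, hell2, hK]
          omega
      rw [hpar]
      rw [show Ψ.e ((cut (unroll S.h S.c) t).parent xw)
        = (cut (unroll S'.h S'.c) t).parent (Ψ.e xw) from Ψ.hom.1 xw]
      have hYpar := parent_lab S'.h S'.c t (Ψ.e xw) (by rw [hidxY, hK]; omega)
      exact hYpar.1

lemma recMap_inv : ∀ w, recMap S' S Ψ.symm.e (recMap S S' Ψ.e w) = w := by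
  intro w
  by_cases hw : Cyc S.h w
  · rw [recMap_cyc S S' Ψ.e hw]
    have hcy' : Cyc S'.h (zp S'.h S'.c p (dW S.h S.c w)) := S'.zp_cyc _
    rw [recMap_cyc S' S Ψ.symm.e hcy']
    have hmod : dW S'.h S'.c (zp S'.h S'.c p (dW S.h S.c w)) % p = dW S.h S.c w % p :=
      S'.valid_mod (S'.dW_spec _) (S'.zp_spec _)
    rw [S.zp_mod hmod]
    exact (S.zp_unique _ hw (S.dW_spec w)).symm
  · rw [recMap_ncyc S S' Ψ.e hw]
    set K := jj S.h S.c p w + ell S.h w with hK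
    set xw := mkV S.h S.c t w K (S.vertex_valid w) (K_le_t S w) with hxw
    have hidxxw : idx xw = K := by rw [hxw]; rfl
    have hlabxw : lab xw = w := by rw [hxw]; rfl
    have hKb : K ≤ p - 1 + Dm := K_le S w
    have hellpos : 1 ≤ ell S.h w := ell_pos S.h w hw
    set w' := lab (Ψ.e xw) with hw'
    have hidxY : idx (Ψ.e xw) = K := by rw [iso_idx S S' Ψ xw, hidxxw]
    -- transport of Cyc along ancestors
    have hps : ∀ s, s ≤ K → (Cyc S.h (S.h^[s] w) ↔ Cyc S'.h (S'.h^[s] w')) := by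
      intro s hs
      have h1 := parent_iter_lab S.h S.c t s xw (by rw [hidxxw]; omega)
      have h2 := parent_iter_lab S'.h S'.c t s (Ψ.e xw) (by rw [hidxY]; omega)
      have h3 : (cut (unroll S'.h S'.c) t).parent^[s] (Ψ.e xw)
          = Ψ.e ((cut (unroll S.h S.c) t).parent^[s] xw) := (Ψ.hom.iterate s xw).symm
      have h4 := cyc_transport S S' Ψ ((cut (unroll S.h S.c) t).parent^[s] xw) (by
        have hb := h1.2
        have htt := S.ht
        have hKb2 := K_le S w
        omega)
      rw [h1.1, hlabxw] at h4
      rw [h3] at h2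
      rw [h2.1] at h4
      exact h4
    -- w' is off the cycle
    have hw'ncyc : ¬ Cyc S'.h w' := by
      have := (hps 0 (by omega))
      simpa using (fun hc => hw (this.mpr hc))
    -- equal transient length
    have hell' : ell S'.h w' = ell S.h w := by
      apply le_antisymm
      · apply Nat.sInf_le
        show Cyc S'.h (S'.h^[ell S.h w] w')
        exact (hps (ell S.h w) (by omega)).mp (ell_spec S.h w)
      · by_contra hlt
        push_neg at hlt
        have hcy := ell_spec S'.h w'
        have := (hps (ell S'.h w') (by omega)).mpr hcy
        have hge := (cyc_iff_ell_le S.h w (ell S'.h w')).mp this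
        omega
    -- entry point of w'
    have hzval : S.h^[jj S.h S.c p w] (entryPt S.h w) = S.c := by
      have := S.vertex_valid w
      rwa [Function.iterate_add_apply] at this
    have hentryz : entryPt S.h w = zp S.h S.c p (jj S.h S.c p w) :=
      S.zp_unique _ (entry_cyc S.h w) hzval
    have hparent_entry : (cut (unroll S.h S.c) t).parent^[ell S.h w] xw
        = mkV S.h S.c t (zp S.h S.c p (jj S.h S.c p w)) (jj S.h S.c p w)
          (S.zp_spec _) (by have := S.jj_lt w; have := S.ht; omega) := by
      have hp := parent_iter_lab S.h S.c t (ell S.h w) xw (by rw [hidxxw]; omega)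
      apply V_ext
      · rw [hp.1, hlabxw]
        exact hentryz
      · rw [hp.2]
        show idx xw - ell S.h w = jj S.h S.c p w
        omega
    have hspine := spine_pres S S' Ψ (jj S.h S.c p w)
      (by have := S.jj_lt w; have := S.ht; omega) (S.zp_spec _) (S'.zp_spec _)
    have hentry' : entryPt S'.h w' = zp S'.h S'.c p (jj S.h S.c p w) := by
      unfold entryPt
      rw [hell']
      have h2 := parent_iter_lab S'.h S'.c t (ell S.h w) (Ψ.e xw) (by rw [hidxY]; omega)
      have h3 : (cut (unroll S'.h S'.c) t).parent^[ell S.h w] (Ψ.e xw)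
          = Ψ.e ((cut (unroll S.h S.c) t).parent^[ell S.h w] xw) :=
        (Ψ.hom.iterate _ xw).symm
      rw [h3, hparent_entry, hspine] at h2
      have := h2.1
      rw [show lab (mkV S'.h S'.c t (zp S'.h S'.c p (jj S.h S.c p w)) (jj S.h S.c p w)
        (S'.zp_spec _) (by have := S.jj_lt w; have := S.ht; omega)) = zp S'.h S'.c p (jj S.h S.c p w)
        from rfl] at this
      exact this.symm
    have hjj' : jj S'.h S'.c p w' = jj S.h S.c p w := by
      unfold jj
      rw [hentry']
      have hmod2 : dW S'.h S'.c (zp S'.h S'.c p (jj S.h S.c p w)) % p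
          = jj S.h S.c p w % p := S'.valid_mod (S'.dW_spec _) (S'.zp_spec _)
      rw [hmod2]
      exact Nat.mod_eq_of_lt (S.jj_lt w)
    -- conclude
    rw [recMap_ncyc S' S Ψ.symm.e hw'ncyc]
    have hvert : mkV S'.h S'.c t w' (jj S'.h S'.c p w' + ell S'.h w')
        (S'.vertex_valid w') (K_le_t S' w') = Ψ.e xw := by
      apply V_ext
      · rfl
      · show jj S'.h S'.c p w' + ell S'.h w' = idx (Ψ.e xw)
        rw [hjj', hell', hidxY, hK]
    rw [hvert]
    rw [show Ψ.symm.e (Ψ.e xw) = xw from Ψ.e.symm_apply_apply xw]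
    exact hlabxw

include Ψ in
lemma fgiso_of_siso : FGIso S.h S'.h := by
  have linv : Function.LeftInverse (recMap S' S Ψ.symm.e) (recMap S S' Ψ.e) :=
    recMap_inv S S' Ψ
  have rinv : Function.RightInverse (recMap S' S Ψ.symm.e) (recMap S S' Ψ.e) := by
    intro w'
    have h1 := recMap_inv S' S Ψ.symm w'
    have hee : Ψ.symm.symm.e = Ψ.e := by
      cases Ψ with
      | mk e hom => rfl
    rwa [hee] at h1
  exact ⟨⟨recMap S S' Ψ.e, recMap S' S Ψ.symm.e, linv, rinv⟩, recMap_equiv S S' Ψ⟩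

end RecMap

/-! ### Assembly helpers -/

section Assemble
variable {α : Type*} (f : α → α)

lemma back_iterate {a : α} {N : ℕ} (hN : 1 ≤ N) (ha : f^[N] a = a) (k : ℕ) :
    ∃ u, f^[k] u = a := by
  refine ⟨f^[N*(k+1) - k] a, ?_⟩
  rw [← Function.iterate_add_apply]
  rw [show k + (N*(k+1) - k) = N*(k+1) by
    have := Nat.mul_le_mul_right (k+1) hN; omega]
  exact cyc_mul_iterate ha (k+1)

lemma cut_heights_le {V : Type*} (T : InTree V) (t : ℕ) :
    ∀ v : CutVertex T t, (cut T t).height v ≤ t := fun v => by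
  rw [cut_height]; exact v.2

end Assemble

end UB


/-- Upper bound on the number of solutions of `A × X ⊇ B`: any family of pairwise
non-isomorphic connected FGs `hᵢ`, each with exactly `p` periodic points and each with
`f × hᵢ ⊇ g`, has at most `|𝒫_A|` members. -/
theorem upper_bound_solutions {α β : Type*} [Fintype α] [Fintype β] [Nonempty α] [Nonempty β]
    (f : α → α) (g : β → β) (hf : FGConnected f) (hg : FGConnected g)
    (p : ℕ) (hp : 1 ≤ p)
    (m : ℕ) (γ : Fin m → Type*) [∀ i, Fintype (γ i)] [∀ i, Nonempty (γ i)]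
    (h : ∀ i, γ i → γ i)
    (hconn : ∀ i, FGConnected (h i))
    (hper : ∀ i, periodicCount (h i) = p)
    (hcont : ∀ i, FGContains f (h i) g)
    (hnoniso : ∀ i j, i ≠ j → ¬ FGIso (h i) (h j)) :
    m ≤ periodicCount f := by
  classical
  obtain ⟨x0⟩ := (inferInstance : Nonempty β)
  obtain ⟨k0, hk0, hbc⟩ := UB.exists_cyc_iterate g x0
  set b := g^[k0] x0 with hbdef
  obtain ⟨N, hN1, hNb⟩ := hbc
  choose e he1 he2 he3 using hcont
  have hfix : ∀ i, f^[N] (e i b).1 = (e i b).1 ∧ (h i)^[N] (e i b).2 = (e i b).2 := by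
    intro i
    have hh := UB.e_iter f (h i) g (e i) (he2 i) N b
    rw [hNb, UB.prod_iter] at hh
    exact ⟨(congrArg Prod.fst hh).symm, (congrArg Prod.snd hh).symm⟩
  set F : Fin m → {x : α // ∃ n, 1 ≤ n ∧ f^[n] x = x} :=
    fun i => ⟨(e i b).1, ⟨N, hN1, (hfix i).1⟩⟩ with hF
  have hinjF : Function.Injective F := by
    intro i j hij
    by_contra hne
    apply hnoniso i j hne
    -- common periodic point of f
    set a := (e i b).1 with ha
    have haj : (e j b).1 = a := (congrArg Subtype.val hij).symm
    have hacyc : f^[N] a = a := (hfix i).1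
    -- the two candidate solutions
    have hcyci : UB.Cyc (h i) (e i b).2 := ⟨N, hN1, (hfix i).2⟩
    have hcycj : UB.Cyc (h j) (e j b).2 := ⟨N, hN1, (hfix j).2⟩
    have hmpi : Function.minimalPeriod (h i) (e i b).2 = p := by
      rw [← hper i]
      exact (UB.periodicCount_eq_minimalPeriod (h i) (hconn i) hcyci).symm
    have hmpj : Function.minimalPeriod (h j) (e j b).2 = p := by
      rw [← hper j]
      exact (UB.periodicCount_eq_minimalPeriod (h j) (hconn j) hcycj).symm
    set Dm := max (Nat.card (γ i)) (Nat.card (γ j)) with hDm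
    set t := p + 2*Dm + 2 with htdef
    -- unroll isomorphisms
    have Ii := UB.embIso f (h i) g (e i) b (he1 i) (he2 i) (he3 i)
    have Ij := UB.embIso f (h j) g (e j) b (he1 j) (he2 j) (he3 j)
    rw [haj] at Ij
    have Ki := (UB.cutIso Ii t).trans
      (UB.cutStarIso (unroll f a) (unroll (h i) (e i b).2) t)
    have Kj := (UB.cutIso Ij t).trans
      (UB.cutStarIso (unroll f a) (unroll (h j) (e j b).2) t)
    -- top vertex of the cut unroll of f at a
    have hAtop : ∃ v : CutVertex (unroll f a) t, (cut (unroll f a) t).height v = t := by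
      obtain ⟨u, hu⟩ := UB.back_iterate f hN1 hacyc t
      exact ⟨UB.mkV f a t u t hu (le_refl t), by rw [UB.cut_height, UB.unroll_height]; rfl⟩
    -- counting
    have hcnt : ∀ {V' : Type _} (T : InTree V'), Finite V' → (∀ v, T.height v ≤ t) →
        UB.cnt T (cut (unroll (h i) (e i b).2) t) = UB.cnt T (cut (unroll (h j) (e j b).2) t) := by
      intro V' T hFin hH
      haveI := hFin
      have h1 : UB.cnt T (cut (unroll g b) t)
          = UB.cnt T (cut (unroll f a) t) * UB.cnt T (cut (unroll (h i) (e i b).2) t) := by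
        rw [UB.cnt_congr_right T Ki, UB.cnt_star]
      have h2 : UB.cnt T (cut (unroll g b) t)
          = UB.cnt T (cut (unroll f a) t) * UB.cnt T (cut (unroll (h j) (e j b).2) t) := by
        rw [UB.cnt_congr_right T Kj, UB.cnt_star]
      have hpos : 1 ≤ UB.cnt T (cut (unroll f a) t) :=
        UB.cnt_pos T (cut (unroll f a) t) t hAtop hH
      exact Nat.eq_of_mul_eq_mul_left (by omega) (h1.symm.trans h2)
    have hiso : Nonempty (UB.SIso (cut (unroll (h i) (e i b).2) t)
        (cut (unroll (h j) (e j b).2) t)) := by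
      refine UB.nonempty_siso _ _ t (fun V' hF T hH => hcnt T hF hH)
        (fun V' hF T hH => (hcnt T hF hH).symm)
        (UB.cut_heights_le _ t) (UB.cut_heights_le _ t)
    obtain ⟨Ψ⟩ := hiso
    exact UB.fgiso_of_siso
      ⟨h i, (e i b).2, hp, hcyci, hmpi,
        UB.reach_of_connected (h i) (hconn i) hcyci, le_max_left _ _, le_refl _⟩
      ⟨h j, (e j b).2, hp, hcycj, hmpj,
        UB.reach_of_connected (h j) (hconn j) hcycj, le_max_right _ _, le_refl _⟩ Ψ
  calc m = Nat.card (Fin m) := by simp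
    _ ≤ Nat.card {x : α // ∃ n, 1 ≤ n ∧ f^[n] x = x} := Nat.card_le_card_of_injective F hinjF
    _ = periodicCount f := rfl
end
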